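/- arXiv:1211.3695 — 14 statements merged into one kernel-verified Lean document; each statement's English description precedes it below -/
import Mathlib

section
/- Let G be a group and α a normalized 3-cocycle on G. Then for every a ∈ G the function β_a satisfies the twisted 2-cocycle condition: β_{x⁻¹ax}(y,z) · β_a(x, yz) = β_a(xy, z) · β_a(x, y) for all x, y, z ∈ G, and the normalization condition β_a(x, e) = β_a(e, x) = 1 for all x ∈ G. -/
def IsNormalized3Cocycle {G : Type*} [Group G] (α : G → G → G → ℂˣ) : Prop :=
  (∀ g₀ g₁ g₂ g₃ : G,
      α g₁ g₂ g₃ * (α (g₀ * g₁) g₂ g₃)⁻¹ * α g₀ (g₁ * g₂) g₃ *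
        (α g₀ g₁ (g₂ * g₃))⁻¹ * α g₀ g₁ g₂ = 1) ∧
  (∀ g h : G, α 1 g h = 1 ∧ α g 1 h = 1 ∧ α g h 1 = 1)

def betaTw {G : Type*} [Group G] (α : G → G → G → ℂˣ) (a b c : G) : ℂˣ :=
  α a b c * α b c (c⁻¹ * b⁻¹ * a * b * c) * (α b (b⁻¹ * a * b) c)⁻¹

theorem betaTw_twisted_two_cocycle_and_normalized
    {G : Type*} [Group G] (α : G → G → G → ℂˣ)
    (hα : IsNormalized3Cocycle α) (a : G) :
    (∀ x y z : G,
      betaTw α (x⁻¹ * a * x) y z * betaTw α a x (y * z) =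
        betaTw α a (x * y) z * betaTw α a x y) ∧
    (∀ x : G, betaTw α a x 1 = 1 ∧ betaTw α a 1 x = 1) := by
  obtain ⟨hc, hn⟩ := hα
  constructor
  · intro x y z
    have h2 := hc x (x⁻¹*a*x) y z
    have h3 := hc x y (y⁻¹*(x⁻¹*a*x)*y) z
    have h4 := hc x y z (z⁻¹*(y⁻¹*(x⁻¹*a*x)*y)*z)
    have h5 := hc a x y z
    simp only [betaTw, mul_assoc, mul_inv_rev, inv_mul_cancel_left, mul_inv_cancel_left,
      inv_inv] at h2 h3 h4 h5 ⊢
    rw [← Units.val_inj] at h2 h3 h4 h5 ⊢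
    push_cast at h2 h3 h4 h5 ⊢
    field_simp at h2 h3 h4 h5 ⊢
    simp only [(inv_eq_one_div : ∀ g : G, g⁻¹ = 1 / g)] at h2 h3 h4 h5 ⊢
    set A1 : ℂ := ((α (1/x*(a*x)) y z : ℂˣ) : ℂ) with hA1
    set A2 : ℂ := ((α (a*x) y z : ℂˣ) : ℂ) with hA2
    set A3 : ℂ := ((α x (1/x*(a*(x*y))) z : ℂˣ) : ℂ) with hA3
    set A4 : ℂ := ((α x (1/x*(a*x)) (y*z) : ℂˣ) : ℂ) with hA4
    set A5 : ℂ := ((α x (1/x*(a*x)) y : ℂˣ) : ℂ) with hA5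
    set B1 : ℂ := ((α y (1/y*(1/x*(a*(x*y)))) z : ℂˣ) : ℂ) with hB1
    set B2 : ℂ := ((α (x*y) (1/y*(1/x*(a*(x*y)))) z : ℂˣ) : ℂ) with hB2
    set B3 : ℂ := ((α x y (1/y*(1/x*(a*(x*(y*z))))) : ℂˣ) : ℂ) with hB3
    set B4 : ℂ := ((α x y (1/y*(1/x*(a*(x*y)))) : ℂˣ) : ℂ) with hB4
    set C1 : ℂ := ((α y z (1/z*(1/y*(1/x*(a*(x*(y*z)))))) : ℂˣ) : ℂ) with hC1
    set C2 : ℂ := ((α (x*y) z (1/z*(1/y*(1/x*(a*(x*(y*z)))))) : ℂˣ) : ℂ) with hC2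
    set C3 : ℂ := ((α x (y*z) (1/z*(1/y*(1/x*(a*(x*(y*z)))))) : ℂˣ) : ℂ) with hC3
    set C4 : ℂ := ((α x y z : ℂˣ) : ℂ) with hC4
    set D1 : ℂ := ((α a (x*y) z : ℂˣ) : ℂ) with hD1
    set D2 : ℂ := ((α a x (y*z) : ℂˣ) : ℂ) with hD2
    set D3 : ℂ := ((α a x y : ℂˣ) : ℂ) with hD3
    have nA1 : A1 ≠ 0 := by rw [hA1]; exact Units.ne_zero _
    have nA2 : A2 ≠ 0 := by rw [hA2]; exact Units.ne_zero _
    have nA3 : A3 ≠ 0 := by rw [hA3]; exact Units.ne_zero _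
    have nA4 : A4 ≠ 0 := by rw [hA4]; exact Units.ne_zero _
    have nA5 : A5 ≠ 0 := by rw [hA5]; exact Units.ne_zero _
    have nB1 : B1 ≠ 0 := by rw [hB1]; exact Units.ne_zero _
    have nB2 : B2 ≠ 0 := by rw [hB2]; exact Units.ne_zero _
    have nB3 : B3 ≠ 0 := by rw [hB3]; exact Units.ne_zero _
    have nB4 : B4 ≠ 0 := by rw [hB4]; exact Units.ne_zero _
    have nC1 : C1 ≠ 0 := by rw [hC1]; exact Units.ne_zero _
    have nC2 : C2 ≠ 0 := by rw [hC2]; exact Units.ne_zero _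
    have nC3 : C3 ≠ 0 := by rw [hC3]; exact Units.ne_zero _
    have nC4 : C4 ≠ 0 := by rw [hC4]; exact Units.ne_zero _
    have nD1 : D1 ≠ 0 := by rw [hD1]; exact Units.ne_zero _
    have nD2 : D2 ≠ 0 := by rw [hD2]; exact Units.ne_zero _
    have nD3 : D3 ≠ 0 := by rw [hD3]; exact Units.ne_zero _
    have key : (A1*(C1*(D2*C3))*(B2*A5)) * ((A2*A4)*((B1*A3*B4)*((C2*B3)*(C4*D1*D3)))) =
        (D1*(C2*(D3*B4))*(B1*A4)) * ((A2*A4)*((B1*A3*B4)*((C2*B3)*(C4*D1*D3)))) := by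
      linear_combination
        ((D1*C2*D3*B4*B1*A4)*(B1*A3*B4)*(C2*B3)*(C4*D1*D3)) * h2
        - ((D1*C2*D3*B4*B1*A4)*(A1*A3*A5)*(C2*B3)*(C4*D1*D3)) * h3
        + ((D1*C2*D3*B4*B1*A4)*(A1*A3*A5)*(B2*B3)*(C4*D1*D3)) * h4
        - ((D1*C2*D3*B4*B1*A4)*(A1*A3*A5)*(B2*B3)*(C1*C3*C4)) * h5
    linear_combination mul_right_cancel₀ (b := (A2*A4)*((B1*A3*B4)*((C2*B3)*(C4*D1*D3)))) (by
      simp only [ne_eq, mul_eq_zero, not_or]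
      exact ⟨⟨nA2, nA4⟩, ⟨⟨nB1, nA3⟩, nB4⟩, ⟨nC2, nB3⟩, ⟨nC4, nD1⟩, nD3⟩) key
  · intro x
    constructor
    · simp [betaTw, (hn _ _).2.2, (hn _ _).2.1]
    · simp [betaTw, (hn _ _).1, (hn _ _).2.1]
end

section
/- Let G be a group and α a normalized 3-cocycle on G. Fix g ∈ G and h ∈ Z_g. Then the function x ↦ ρ^g(h,x) is multiplicative on Z_{g,h}: for all x, y ∈ Z_{g,h}, ρ^g(h,x) · ρ^g(h,y) = ρ^g(h, xy). -/
/-- The phase `ρ^g(h,x) = β_g(x⁻¹, h) · β_g(h, x⁻¹)⁻¹`. -/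
def rhoTw {G : Type*} [Group G] (α : G → G → G → ℂˣ) (g h x : G) : ℂˣ :=
  betaTw α g x⁻¹ h * (betaTw α g h x⁻¹)⁻¹

namespace RhoAux

set_option linter.unusedSectionVars false

variable {G : Type*} [Group G] (α : G → G → G → ℂˣ)

/-- The complex value of the 3-cocycle. -/
def Av (a b c : G) : ℂ := α a b c

lemma Av_ne (a b c : G) : Av α a b c ≠ 0 := Units.ne_zero _

/-- The 3-cocycle identity at the level of complex values, in fraction-free form. -/
lemma cocC (hα : IsNormalized3Cocycle α) (g0 g1 g2 g3 : G) :
    Av α g1 g2 g3 * Av α g0 (g1*g2) g3 * Av α g0 g1 g2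
      = Av α (g0*g1) g2 g3 * Av α g0 g1 (g2*g3) := by
  have h := hα.1 g0 g1 g2 g3
  rw [Units.ext_iff] at h
  simp only [Units.val_mul, Units.val_one, Units.val_inv_eq_inv_val] at h
  field_simp [Av] at h ⊢
  unfold Av
  linear_combination h

/-- The 2-cocycle identity for `ε_g(b,c) = α(g,b,c)·α(b,c,g)/α(b,g,c)` on the centralizer
of `g`, in fraction-free form. -/
lemma epsCoc (hα : IsNormalized3Cocycle α) (g a b c : G)
    (ha : a*g = g*a) (hb : b*g = g*b) (hc : c*g = g*c) :
    Av α g a b * Av α a b g * Av α g (a*b) c * Av α (a*b) c g * Av α a g (b*c) * Av α b g c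
      = Av α g a (b*c) * Av α a (b*c) g * Av α g b c * Av α b c g * Av α a g b * Av α (a*b) g c := by
  have D1 := cocC α hα g a b c
  rw [← ha] at D1
  have D2 := cocC α hα a g b c
  rw [← hb] at D2
  have D3 := cocC α hα a b g c
  rw [← hc] at D3
  have D4 := cocC α hα a b c g
  have key :
      (Av α g a b * Av α a b g * Av α g (a*b) c * Av α (a*b) c g * Av α a g (b*c) * Av α b g c)
        * (Av α (a*g) b c * Av α g a (b*c))
        * (Av α g b c * Av α a (b*g) c * Av α a g b)
        * (Av α (a*b) g c * Av α a b (c*g))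
        * (Av α b c g * Av α a (b*c) g * Av α a b c)
      = (Av α g a (b*c) * Av α a (b*c) g * Av α g b c * Av α b c g * Av α a g b * Av α (a*b) g c)
        * (Av α a b c * Av α g (a*b) c * Av α g a b)
        * (Av α (a*g) b c * Av α a g (b*c))
        * (Av α b g c * Av α a (b*g) c * Av α a b g)
        * (Av α (a*b) c g * Av α a b (c*g)) := by ring
  rw [D1, ← D2, D3, ← D4] at key
  exact mul_right_cancel₀ (by simp [Av]) (mul_right_cancel₀ (by simp [Av])
    (mul_right_cancel₀ (by simp [Av]) (mul_right_cancel₀ (by simp [Av]) key)))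

/-- The key multiplicativity identity for the character `ρ`, in fraction-free form. -/
lemma charCoc (hα : IsNormalized3Cocycle α) (g h x y : G)
    (hh : h*g = g*h) (hx : x*g = g*x) (hxh : x*h = h*x)
    (hy : y*g = g*y) (hyh : y*h = h*y) :
    Av α g x h * Av α x h g * Av α g y h * Av α y h g * Av α g h (y*x) * Av α h (y*x) g
        * Av α (y*x) g h * Av α h g x * Av α h g y
      = Av α g (y*x) h * Av α (y*x) h g * Av α g h x * Av α h x g * Av α g h y * Av α h y g
        * Av α x g h * Av α y g h * Av α h g (y*x) := by
  have C1 := epsCoc α hα g y x h hy hx hh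
  rw [hxh] at C1
  have C2 := epsCoc α hα g y h x hy hh hx
  rw [hyh] at C2
  have C3 := epsCoc α hα g h y x hh hy hx
  have key :
      (Av α g x h * Av α x h g * Av α g y h * Av α y h g * Av α g h (y*x) * Av α h (y*x) g
          * Av α (y*x) g h * Av α h g x * Av α h g y)
        * (Av α g y x * Av α y x g * Av α g (y*x) h * Av α (y*x) h g * Av α y g (h*x) * Av α x g h)
        * (Av α g y (h*x) * Av α y (h*x) g * Av α g h x * Av α h x g * Av α y g h * Av α (h*y) g x)
        * (Av α g h y * Av α h y g * Av α g (h*y) x * Av α (h*y) x g * Av α h g (y*x) * Av α y g x)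
      = (Av α g (y*x) h * Av α (y*x) h g * Av α g h x * Av α h x g * Av α g h y * Av α h y g
          * Av α x g h * Av α y g h * Av α h g (y*x))
        * (Av α g y (h*x) * Av α y (h*x) g * Av α g x h * Av α x h g * Av α y g x * Av α (y*x) g h)
        * (Av α g y h * Av α y h g * Av α g (h*y) x * Av α (h*y) x g * Av α y g (h*x) * Av α h g x)
        * (Av α g h (y*x) * Av α h (y*x) g * Av α g y x * Av α y x g * Av α h g y * Av α (h*y) g x) := by
    ring
  rw [C1, ← C2, C3] at key
  exact mul_right_cancel₀ (by simp [Av]) (mul_right_cancel₀ (by simp [Av])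
    (mul_right_cancel₀ (by simp [Av]) key))

lemma conj_one (g b : G) (hb : b*g = g*b) : b⁻¹ * g * b = g := by
  rw [mul_assoc, ← hb, ← mul_assoc, inv_mul_cancel, one_mul]

lemma conj_two (g b c : G) (hb : b*g = g*b) (hc : c*g = g*c) :
    c⁻¹ * b⁻¹ * g * b * c = g := by
  have h1 := conj_one g b hb
  calc c⁻¹ * b⁻¹ * g * b * c = c⁻¹ * (b⁻¹ * g * b) * c := by group
    _ = c⁻¹ * g * c := by rw [h1]
    _ = g := conj_one g c hc

lemma betaTw_red (g b c : G) (hb : b*g = g*b) (hc : c*g = g*c) :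
    betaTw α g b c = α g b c * α b c g * (α b g c)⁻¹ := by
  unfold betaTw
  rw [conj_two g b c hb hc, conj_one g b hb]

end RhoAux

open RhoAux in
theorem rhoTw_multiplicative {G : Type*} [Group G] (α : G → G → G → ℂˣ)
    (hα : IsNormalized3Cocycle α) (g h : G) (hgh : h * g = g * h) :
    ∀ x y : G, x * g = g * x → x * h = h * x → y * g = g * y → y * h = h * y →
      rhoTw α g h x * rhoTw α g h y = rhoTw α g h (x * y) := by
  intro x y hxg hxh hyg hyh
  have hx : x⁻¹ * g = g * x⁻¹ := (Commute.inv_left (hxg : Commute x g) : _)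
  have hy : y⁻¹ * g = g * y⁻¹ := (Commute.inv_left (hyg : Commute y g) : _)
  have hxh' : x⁻¹ * h = h * x⁻¹ := (Commute.inv_left (hxh : Commute x h) : _)
  have hyh' : y⁻¹ * h = h * y⁻¹ := (Commute.inv_left (hyh : Commute y h) : _)
  have hxy : (y⁻¹ * x⁻¹) * g = g * (y⁻¹ * x⁻¹) :=
    (Commute.mul_left (hy : Commute y⁻¹ g) (hx : Commute x⁻¹ g) : _)
  rw [rhoTw, rhoTw, rhoTw, mul_inv_rev,
    betaTw_red α g x⁻¹ h hx hgh, betaTw_red α g h x⁻¹ hgh hx,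
    betaTw_red α g y⁻¹ h hy hgh, betaTw_red α g h y⁻¹ hgh hy,
    betaTw_red α g (y⁻¹ * x⁻¹) h hxy hgh, betaTw_red α g h (y⁻¹ * x⁻¹) hgh hxy]
  have key := charCoc α hα g h x⁻¹ y⁻¹ hgh hx hxh' hy hyh'
  simp only [Av] at key
  rw [Units.ext_iff]
  simp only [Units.val_mul, Units.val_inv_eq_inv_val]
  field_simp
  linear_combination key
end

section
/- Let G be a finite group and α a normalized 3-cocycle on G. Fix g ∈ G and h ∈ Z_g. Then (1/|Z_{g,h}|) · Σ_{x ∈ Z_{g,h}} ρ^g(h,x) equals 1 if h is β_g-regular, and equals 0 otherwise. -/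
set_option maxHeartbeats 1600000 in
lemma betaTw_cocycle {G : Type*} [Group G] (α : G → G → G → ℂˣ)
    (hα : IsNormalized3Cocycle α) (a x y z : G) :
    betaTw α a x y * betaTw α a (x*y) z
      = betaTw α a x (y*z) * betaTw α (x⁻¹*a*x) y z := by
  obtain ⟨hc, -⟩ := hα
  have h1 := hc a x y z
  have h2 := hc x (x⁻¹*a*x) y z
  have h3 := hc x y (y⁻¹*(x⁻¹*a*x)*y) z
  have h4 := hc x y z (z⁻¹*(y⁻¹*(x⁻¹*a*x)*y)*z)
  simp only [betaTw, mul_assoc, mul_inv_rev, inv_mul_cancel_left, mul_inv_cancel_left,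
    inv_inv] at h1 h2 h3 h4 ⊢
  rw [← Units.val_inj] at h1 h2 h3 h4 ⊢
  push_cast at h1 h2 h3 h4 ⊢
  field_simp at h1 h2 h3 h4 ⊢
  have hD : ((α x y z : ℂ) * (α (a * x) y z : ℂ) * (α x (x⁻¹ * (a * (x * y))) z : ℂ) * (α x y (y⁻¹ * (x⁻¹ * (a * (x * (y * z))))) : ℂ)) ≠ 0 := by
    simp [Units.ne_zero]
  apply mul_right_cancel₀ hD
  linear_combination ((α (a * x) y z : ℂ) * (α x (x⁻¹ * (a * x)) (y * z) : ℂ) * ((α y (y⁻¹ * (x⁻¹ * (a * (x * y)))) z : ℂ) * (α x (x⁻¹ * (a * (x * y))) z : ℂ) * (α x y (y⁻¹ * (x⁻¹ * (a * (x * y)))) : ℂ)) * ((α (x * y) z (z⁻¹ * (y⁻¹ * (x⁻¹ * (a * (x * (y * z)))))) : ℂ) * (α x y (y⁻¹ * (x⁻¹ * (a * (x * (y * z))))) : ℂ))) * h1 - (((α (a * x) y z : ℂ) * (α a x (y * z) : ℂ)) * ((α y (y⁻¹ * (x⁻¹ * (a * (x * y)))) z : ℂ) * (α x (x⁻¹ *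 (a * (x * y))) z : ℂ) * (α x y (y⁻¹ * (x⁻¹ * (a * (x * y)))) : ℂ)) * ((α (x * y) z (z⁻¹ * (y⁻¹ * (x⁻¹ * (a * (x * (y * z)))))) : ℂ) * (α x y (y⁻¹ * (x⁻¹ * (a * (x * (y * z))))) : ℂ))) * h2 + (((α (a * x) y z : ℂ) * (α a x (y * z) : ℂ)) * ((α (x⁻¹ * (a * x)) y z : ℂ) * (α x (x⁻¹ * (a * (x * y))) z : ℂ) * (α x (x⁻¹ * (a * x)) y : ℂ)) * ((α (x * y) z (z⁻¹ * (y⁻¹ * (x⁻¹ * (a * (x * (y * z)))))) : ℂ) * (α x y (y⁻¹ * (x⁻¹ * (a * (x * (y * z))))) : ℂ))) * h3 - (((α (a * x) y z : ℂ) * (α a x (y * z) : ℂ)) * ((α (x⁻¹ * (a * x)) y z : ℂ) * (α x (x⁻¹ * (a * (x * y))) z : ℂ) * (α x (x⁻¹ * (a * x)) y : ℂ)) * ((α (x * y) (y⁻¹ * (x⁻¹ * (a * (x * y)))) z : ℂ) * (α x y (y⁻¹ * (x⁻¹ * (a * (x * (y * z))))) : ℂ))) * h4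

lemma betaTw_one_mid {G : Type*} [Group G] (α : G → G → G → ℂˣ)
    (hα : IsNormalized3Cocycle α) (a c : G) : betaTw α a 1 c = 1 := by
  obtain ⟨-, hn⟩ := hα
  simp [betaTw, (hn _ _).1, (hn _ _).2.1, (hn _ _).2.2]

lemma betaTw_one_right {G : Type*} [Group G] (α : G → G → G → ℂˣ)
    (hα : IsNormalized3Cocycle α) (a b : G) : betaTw α a b 1 = 1 := by
  obtain ⟨-, hn⟩ := hα
  simp [betaTw, (hn _ _).1, (hn _ _).2.1, (hn _ _).2.2]

set_option maxHeartbeats 1600000 in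
lemma psi_mul {G : Type*} [Group G] (α : G → G → G → ℂˣ)
    (hα : IsNormalized3Cocycle α) (g h : G) (hgh : h * g = g * h) (x y : G)
    (hxg : x * g = g * x) (hxh : x * h = h * x)
    (hyg : y * g = g * y) (hyh : y * h = h * y) :
    betaTw α g (x*y) h * (betaTw α g h (x*y))⁻¹
      = (betaTw α g x h * (betaTw α g h x)⁻¹) * (betaTw α g y h * (betaTw α g h y)⁻¹) := by
  have e1 : h⁻¹ * g * h = g := by rw [mul_assoc, ← hgh, inv_mul_cancel_left]
  have e2 : x⁻¹ * g * x = g := by rw [mul_assoc, ← hxg, inv_mul_cancel_left]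
  have A := betaTw_cocycle α hα g h x y
  rw [e1, ← hxh] at A
  have B := betaTw_cocycle α hα g x y h
  rw [e2, hyh] at B
  have C := betaTw_cocycle α hα g x h y
  rw [e2] at C
  rw [← Units.val_inj] at A B C ⊢
  push_cast at A B C ⊢
  field_simp
  have hD : ((betaTw α g (x * h) y : ℂ) * (betaTw α g x y : ℂ) * (betaTw α g x (h * y) : ℂ)) ≠ 0 := by simp [Units.ne_zero]
  apply mul_right_cancel₀ hD
  linear_combination ((betaTw α g h x : ℂ) * (betaTw α g (x * h) y : ℂ) * (betaTw α g x (h * y) : ℂ) * (betaTw α g h y : ℂ)) * B + ((betaTw α g x (h * y) : ℂ) * (betaTw α g y h : ℂ) * (betaTw α g x (h * y) : ℂ) * (betaTw α g h y : ℂ)) * A - ((betaTw α g x (h * y) : ℂ) * (betaTw α g y h : ℂ) * (betaTw α g h (x * y) : ℂ) * (betaTw α g x y : ℂ)) * C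
/-- `h ∈ Z_g` is `β_g`-regular if `β_g(h,k) = β_g(k,h)` for all `k ∈ Z_{g,h}`. -/
def IsBetaRegular {G : Type*} [Group G] (α : G → G → G → ℂˣ) (g h : G) : Prop :=
  ∀ k : G, k * g = g * k → k * h = h * k → betaTw α g h k = betaTw α g k h

open Classical in
theorem average_rhoTw_eq_ite_regular {G : Type*} [Group G] [Fintype G]
    (α : G → G → G → ℂˣ) (hα : IsNormalized3Cocycle α) (g h : G)
    (hgh : h * g = g * h) :
    ((Finset.univ.filter fun x : G => x * g = g * x ∧ x * h = h * x).card : ℂ)⁻¹ *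
      ∑ x ∈ Finset.univ.filter (fun x : G => x * g = g * x ∧ x * h = h * x),
        (rhoTw α g h x : ℂ) =
      if IsBetaRegular α g h then 1 else 0 := by
  classical
  set S := Finset.univ.filter (fun x : G => x * g = g * x ∧ x * h = h * x) with hS
  have toC : ∀ {u v : G}, u * v = v * u → Commute u v := fun e => e
  have hmemS : ∀ x : G, x ∈ S ↔ (x * g = g * x ∧ x * h = h * x) := by
    intro x; simp [hS]
  have hone : (1 : G) ∈ S := by simp [hmemS]
  have hinvmem : ∀ x : G, x ∈ S → x⁻¹ ∈ S := by
    intro x hx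
    rw [hmemS] at hx ⊢
    exact ⟨((toC hx.1).inv_left).eq, ((toC hx.2).inv_left).eq⟩
  have hinv : ∀ x : G, x ∈ S ↔ x⁻¹ ∈ S := by
    intro x
    refine ⟨hinvmem x, fun hx => ?_⟩
    simpa using hinvmem _ hx
  have hmul : ∀ x ∈ S, ∀ y ∈ S, x * y ∈ S := by
    intro x hx y hy
    rw [hmemS] at hx hy ⊢
    exact ⟨((toC hx.1).mul_left (toC hy.1)).eq, ((toC hx.2).mul_left (toC hy.2)).eq⟩
  set Ψ : G → ℂˣ := fun x => betaTw α g x h * (betaTw α g h x)⁻¹ with hΨ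
  have hsum : ∑ x ∈ S, (rhoTw α g h x : ℂ) = ∑ x ∈ S, (Ψ x : ℂ) := by
    refine Finset.sum_equiv (Equiv.inv G) (fun i => ?_) (fun i _ => ?_)
    · simpa using hinv i
    · rfl
  rw [hsum]
  have hcard : (S.card : ℂ) ≠ 0 := by
    have : 0 < S.card := Finset.card_pos.mpr ⟨1, hone⟩
    exact_mod_cast this.ne'
  by_cases hreg : IsBetaRegular α g h
  · rw [if_pos hreg]
    have : ∀ x ∈ S, (Ψ x : ℂ) = 1 := by
      intro x hx
      rw [hmemS] at hx
      have := hreg x hx.1 hx.2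
      simp [hΨ, ← this]
    rw [Finset.sum_congr rfl this]
    simp [hcard, inv_mul_cancel₀]
  · rw [if_neg hreg]
    simp only [IsBetaRegular, not_forall] at hreg
    obtain ⟨k, hkg, hkh, hne⟩ := hreg
    have hk : k ∈ S := (hmemS k).mpr ⟨hkg, hkh⟩
    have hΨk : (Ψ k : ℂ) ≠ 1 := by
      intro e
      apply hne
      have : Ψ k = 1 := Units.ext (by simpa using e)
      have := mul_inv_eq_one.mp this
      exact this.symm
    have hshift : ∑ x ∈ S, ((Ψ (k * x) : ℂ)) = ∑ x ∈ S, (Ψ x : ℂ) := by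
      refine Finset.sum_equiv (Equiv.mulLeft k) (fun i => ?_) (fun i _ => ?_)
      · simp only [Equiv.coe_mulLeft]
        constructor
        · intro hi; exact hmul k hk i hi
        · intro hi
          have := hmul _ (hinvmem k hk) _ hi
          simpa using this
      · simp
    have hmulΨ : ∀ x ∈ S, (Ψ (k * x) : ℂ) = (Ψ k : ℂ) * (Ψ x : ℂ) := by
      intro x hx
      rw [hmemS] at hx
      have := psi_mul α hα g h hgh k x hkg hkh hx.1 hx.2
      have := congrArg (Units.val) this
      push_cast at this
      simpa [hΨ] using this
    rw [Finset.sum_congr rfl hmulΨ, ← Finset.mul_sum] at hshift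
    have hzero : ∑ x ∈ S, (Ψ x : ℂ) = 0 := by
      by_contra hne0
      exact hΨk (mul_right_cancel₀ hne0 (by simpa using hshift))
    rw [hzero, mul_zero]
end

section
/- Let G be a group and α a normalized 3-cocycle on G. For all g, x ∈ G and h ∈ Z_g: h is β_g-regular if and only if xhx⁻¹ (which lies in Z_{xgx⁻¹}) is β_{xgx⁻¹}-regular. -/
set_option maxHeartbeats 2000000 in
theorem betaTw_star {G : Type*} [Group G] (α : G → G → G → ℂˣ) (hα : IsNormalized3Cocycle α)
    (g x y z : G) :
    betaTw α g x y * betaTw α g (x * y) z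
      = betaTw α (x⁻¹ * g * x) y z * betaTw α g x (y * z) := by
  have A := congrArg Units.val (hα.1 g x y z)
  have B := congrArg Units.val (hα.1 x (x⁻¹ * g * x) y z)
  have C := congrArg Units.val (hα.1 x y (y⁻¹ * (x⁻¹ * g * x) * y) z)
  have D := congrArg Units.val (hα.1 x y z (z⁻¹ * (y⁻¹ * (x⁻¹ * g * x) * y) * z))
  rw [Units.ext_iff]
  simp only [betaTw, mul_assoc, mul_inv_rev, inv_inv, mul_inv_cancel_left,
    inv_mul_cancel_left, mul_inv_cancel, inv_mul_cancel, one_mul, mul_one, inv_one,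
    Units.val_mul, Units.val_inv_eq_inv_val, Units.val_one] at A B C D ⊢
  field_simp at A B C D ⊢
  apply mul_right_cancel₀ (b := (α (g * x) (y) (z) : ℂ) * (α (g * x) (y) (z) : ℂ) * (α (g) (x) (y * z) : ℂ) * (α (x * y) (y⁻¹ * (x⁻¹ * (g * (x * y)))) (z) : ℂ) * (α (x * y) (z) (z⁻¹ * (y⁻¹ * (x⁻¹ * (g * (x * (y * z)))))) : ℂ) * (α (x) (x⁻¹ * (g * x)) (y * z) : ℂ) * (α (x) (y) (y⁻¹ * (x⁻¹ * (g * (x * (y * z))))) : ℂ) * (α (x) (y) (y⁻¹ * (x⁻¹ * (g * (x * (y * z))))) : ℂ)) (by simp [Units.ne_zero])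
  linear_combination ((α (g * x) (y) (z) : ℂ) * (α (g) (x) (y * z) : ℂ) * (α (x⁻¹ * (g * x)) (y) (z) : ℂ) * (α (x * y) (y⁻¹ * (x⁻¹ * (g * (x * y)))) (z) : ℂ) * (α (x * y) (z) (z⁻¹ * (y⁻¹ * (x⁻¹ * (g * (x * (y * z)))))) : ℂ) * (α (x) (x⁻¹ * (g * x)) (y * z) : ℂ) * (α (x) (x⁻¹ * (g * x)) (y) : ℂ) * (α (x) (x⁻¹ * (g * (x * y))) (z) : ℂ) * (α (x) (y * z) (z⁻¹ * (y⁻¹ * (x⁻¹ * (g * (x * (y * z)))))) : ℂ) * (α (x) (y) (y⁻¹ * (x⁻¹ * (g * (x * y)))) : ℂ) * (α (x) (y) (y⁻¹ * (x⁻¹ * (g * (x * (y * z))))) : ℂ) * (α (y) (y⁻¹ * (x⁻¹ * (g * (x * y)))) (z) : ℂ) * (α (y) (z) (z⁻¹ * (y⁻¹ * (x⁻¹ * (g * (x * (y * z)))))) : ℂ)) * A - ((α (g * x) (y) (z) : ℂ) * (α (g) (x * y) (z) : ℂ) * (α (g) (x) (y * z) : ℂ) * (α (g) (x) (y) : ℂ)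 * (α (x * y) (y⁻¹ * (x⁻¹ * (g * (x * y)))) (z) : ℂ) * (α (x * y) (z) (z⁻¹ * (y⁻¹ * (x⁻¹ * (g * (x * (y * z)))))) : ℂ) * (α (x * y) (z) (z⁻¹ * (y⁻¹ * (x⁻¹ * (g * (x * (y * z)))))) : ℂ) * (α (x) (x⁻¹ * (g * x)) (y * z) : ℂ) * (α (x) (y) (y⁻¹ * (x⁻¹ * (g * (x * y)))) : ℂ) * (α (x) (y) (y⁻¹ * (x⁻¹ * (g * (x * (y * z))))) : ℂ) * (α (x) (y) (y⁻¹ * (x⁻¹ * (g * (x * (y * z))))) : ℂ) * (α (y) (y⁻¹ * (x⁻¹ * (g * (x * y)))) (z) : ℂ)) * B + ((α (g * x) (y) (z) : ℂ) * (α (g * x) (y) (z) : ℂ) * (α (g) (x) (y * z) : ℂ) * (α (g) (x) (y * z) : ℂ) * (α (x⁻¹ * (g * x)) (y) (z) : ℂ) * (α (x * y) (y⁻¹ * (x⁻¹ * (g * (x * y)))) (z) : ℂ) * (α (x * y) (z) (z⁻¹ * (y⁻¹ * (x⁻¹ * (g * (x * (y * z)))))) : ℂ) * (α (x) (x⁻¹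 * (g * x)) (y * z) : ℂ) * (α (x) (x⁻¹ * (g * x)) (y) : ℂ) * (α (x) (y * z) (z⁻¹ * (y⁻¹ * (x⁻¹ * (g * (x * (y * z)))))) : ℂ) * (α (x) (y) (y⁻¹ * (x⁻¹ * (g * (x * (y * z))))) : ℂ) * (α (y) (z) (z⁻¹ * (y⁻¹ * (x⁻¹ * (g * (x * (y * z)))))) : ℂ)) * C - ((α (g * x) (y) (z) : ℂ) * (α (g) (x * y) (z) : ℂ) * (α (g) (x) (y * z) : ℂ) * (α (g) (x) (y) : ℂ) * (α (x⁻¹ * (g * x)) (y) (z) : ℂ) * (α (x * y) (y⁻¹ * (x⁻¹ * (g * (x * y)))) (z) : ℂ) * (α (x * y) (z) (z⁻¹ * (y⁻¹ * (x⁻¹ * (g * (x * (y * z)))))) : ℂ) * (α (x) (x⁻¹ * (g * x)) (y * z) : ℂ) * (α (x) (x⁻¹ * (g * x)) (y) : ℂ) * (α (x) (x⁻¹ * (g * (x * y))) (z) : ℂ) * (α (x) (y) (y⁻¹ * (x⁻¹ * (g * (x * y)))) : ℂ) * (α (x) (y) (y⁻¹ * (x⁻¹ * (g * (x * (y * z)))))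 : ℂ) * (α (y) (y⁻¹ * (x⁻¹ * (g * (x * y)))) (z) : ℂ)) * D

set_option maxHeartbeats 2000000 in
theorem betaTw_fwd {G : Type*} [Group G] (α : G → G → G → ℂˣ) (hα : IsNormalized3Cocycle α)
    (g x h : G) (hgh : h * g = g * h) (hr : IsBetaRegular α g h) :
    IsBetaRegular α (x * g * x⁻¹) (x * h * x⁻¹) := by
  intro k' hkg' hkh'
  have hkg : (x⁻¹ * k' * x) * g = g * (x⁻¹ * k' * x) := by
    rw [show (x⁻¹ * k' * x) * g = x⁻¹ * (k' * (x * g * x⁻¹)) * x from by group, hkg']; group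
  have hkh : (x⁻¹ * k' * x) * h = h * (x⁻¹ * k' * x) := by
    rw [show (x⁻¹ * k' * x) * h = x⁻¹ * (k' * (x * h * x⁻¹)) * x from by group, hkh']; group
  have E := congrArg Units.val (hr (x⁻¹ * k' * x) hkg hkh)
  have S1 := congrArg Units.val (betaTw_star α hα (x * g * x⁻¹) x h (x⁻¹ * k' * x))
  have S2 := congrArg Units.val (betaTw_star α hα (x * g * x⁻¹) x (x⁻¹ * k' * x) h)
  have S3 := congrArg Units.val (betaTw_star α hα (x * g * x⁻¹) (x * h * x⁻¹) x (x⁻¹ * k' * x))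
  have S4 := congrArg Units.val (betaTw_star α hα (x * g * x⁻¹) k' x h)
  have S5 := congrArg Units.val (betaTw_star α hα (x * g * x⁻¹) (x * h * x⁻¹) k' x)
  have S6 := congrArg Units.val (betaTw_star α hα (x * g * x⁻¹) k' (x * h * x⁻¹) x)
  have e1 : k' * (x * (h * x⁻¹)) = x * (h * (x⁻¹ * k')) := by
    rw [show k' * (x * (h * x⁻¹)) = k' * (x * h * x⁻¹) from by group, hkh']; group
  have e2 : k'⁻¹ * (x * (g * (x⁻¹ * k'))) = x * (g * x⁻¹) := by
    rw [show k'⁻¹ * (x * (g * (x⁻¹ * k'))) = k'⁻¹ * ((x * g * x⁻¹) * k') from by group, ← hkg']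
    group
  have e3 : x * (h⁻¹ * (g * (h * x⁻¹))) = x * (g * x⁻¹) := by
    rw [show x * (h⁻¹ * (g * (h * x⁻¹))) = x * ((h⁻¹ * (g * h)) * x⁻¹) from by group,
      show h⁻¹ * (g * h) = g from by rw [← hgh, inv_mul_cancel_left]]
  have e4 : x⁻¹ * (k' * (x * h)) = h * (x⁻¹ * (k' * x)) := by
    rw [show x⁻¹ * (k' * (x * h)) = x⁻¹ * ((k' * (x * h * x⁻¹)) * x) from by group, hkh']; group
  rw [Units.ext_iff]
  simp only [mul_assoc, mul_inv_rev, inv_inv, mul_inv_cancel_left, inv_mul_cancel_left,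
    mul_inv_cancel, inv_mul_cancel, one_mul, mul_one, inv_one, Units.val_mul,
    e1, e2, e3, e4] at E S1 S2 S3 S4 S5 S6 ⊢
  apply mul_right_cancel₀ (b := (betaTw α (g) (h) (x⁻¹ * (k' * x)) : ℂ) * (betaTw α (g) (x⁻¹ * (k' * x)) (h) : ℂ) * (betaTw α (g) (x⁻¹ * (k' * x)) (h) : ℂ) * (betaTw α (x * (g * x⁻¹)) (k') (x * h) : ℂ) * (betaTw α (x * (g * x⁻¹)) (k') (x * h) : ℂ) * (betaTw α (x * (g * x⁻¹)) (k') (x) : ℂ) * (betaTw α (x * (g * x⁻¹)) (x * (h * x⁻¹)) (k' * x) : ℂ) * (betaTw α (x * (g * x⁻¹)) (x * (h * x⁻¹)) (k' * x) : ℂ) * (betaTw α (x * (g * x⁻¹)) (x * (h * x⁻¹)) (x) : ℂ) * (betaTw α (x * (g * x⁻¹)) (x) (h * (x⁻¹ * (k' * x))) : ℂ) * (betaTw α (x * (g * x⁻¹)) (x) (h * (x⁻¹ * (k' * x))) : ℂ) * (betaTw α (x * (g * x⁻¹)) (x) (h) : ℂ) * (betaTw α (x * (g * x⁻¹)) (x)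 (x⁻¹ * (k' * x)) : ℂ)) (by simp [Units.ne_zero])
  linear_combination ((betaTw α (g) (x⁻¹ * (k' * x)) (h) : ℂ) * (betaTw α (g) (x⁻¹ * (k' * x)) (h) : ℂ) * (betaTw α (x * (g * x⁻¹)) (k') (x * h) : ℂ) * (betaTw α (x * (g * x⁻¹)) (k') (x * h) : ℂ) * (betaTw α (x * (g * x⁻¹)) (k') (x * (h * x⁻¹)) : ℂ) * (betaTw α (x * (g * x⁻¹)) (k') (x) : ℂ) * (betaTw α (x * (g * x⁻¹)) (x * (h * x⁻¹)) (k' * x) : ℂ) * (betaTw α (x * (g * x⁻¹)) (x * (h * x⁻¹)) (k' * x) : ℂ) * (betaTw α (x * (g * x⁻¹)) (x * (h * x⁻¹)) (x) : ℂ) * (betaTw α (x * (g * x⁻¹)) (x) (h * (x⁻¹ * (k' * x))) : ℂ) * (betaTw α (x * (g * x⁻¹)) (x) (h) : ℂ) * (betaTw α (x * (g * x⁻¹)) (x) (x⁻¹ * (k' * x)) : ℂ)) * S1 - ((betaTw α (g) (h) (x⁻¹ * (k' * x)) : ℂ) * (betaTw α (g) (x⁻¹ * (k' * x)) (h) : ℂ)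 * (betaTw α (x * (g * x⁻¹)) (k') (x * h) : ℂ) * (betaTw α (x * (g * x⁻¹)) (k') (x * (h * x⁻¹)) : ℂ) * (betaTw α (x * (g * x⁻¹)) (k') (x) : ℂ) * (betaTw α (x * (g * x⁻¹)) (x * h) (x⁻¹ * (k' * x)) : ℂ) * (betaTw α (x * (g * x⁻¹)) (x * (h * x⁻¹)) (k' * x) : ℂ) * (betaTw α (x * (g * x⁻¹)) (x * (h * x⁻¹)) (k') : ℂ) * (betaTw α (x * (g * x⁻¹)) (x * (h * x⁻¹)) (x) : ℂ) * (betaTw α (x * (g * x⁻¹)) (x * (h * (x⁻¹ * k'))) (x) : ℂ) * (betaTw α (x * (g * x⁻¹)) (x) (h * (x⁻¹ * (k' * x))) : ℂ) * (betaTw α (x * (g * x⁻¹)) (x) (h) : ℂ)) * S2 - ((betaTw α (g) (h) (x⁻¹ * (k' * x)) : ℂ) * (betaTw α (g) (x⁻¹ * (k' * x)) (h) : ℂ) * (betaTw α (g) (x⁻¹ * (k' * x)) (h) : ℂ) * (betaTw α (x * (g * x⁻¹)) (k') (x * h) : ℂ) * (betaTw α (x * (g * x⁻¹)) (k') (x *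 (h * x⁻¹)) : ℂ) * (betaTw α (x * (g * x⁻¹)) (k') (x) : ℂ) * (betaTw α (x * (g * x⁻¹)) (x * (h * x⁻¹)) (k' * x) : ℂ) * (betaTw α (x * (g * x⁻¹)) (x * (h * x⁻¹)) (k') : ℂ) * (betaTw α (x * (g * x⁻¹)) (x * (h * (x⁻¹ * k'))) (x) : ℂ) * (betaTw α (x * (g * x⁻¹)) (x) (h * (x⁻¹ * (k' * x))) : ℂ) * (betaTw α (x * (g * x⁻¹)) (x) (h * (x⁻¹ * (k' * x))) : ℂ) * (betaTw α (x * (g * x⁻¹)) (x) (h) : ℂ)) * S3 + ((betaTw α (g) (x⁻¹ * (k' * x)) (h) : ℂ) * (betaTw α (g) (x⁻¹ * (k' * x)) (h) : ℂ) * (betaTw α (x * (g * x⁻¹)) (k') (x * h) : ℂ) * (betaTw α (x * (g * x⁻¹)) (k') (x * (h * x⁻¹)) : ℂ) * (betaTw α (x * (g * x⁻¹)) (k') (x) : ℂ) * (betaTw α (x * (g * x⁻¹)) (x * h) (x⁻¹ * (k' * x)) : ℂ) * (betaTw α (x * (g * x⁻¹)) (x * (h * x⁻¹)) (k' * x) :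 ℂ) * (betaTw α (x * (g * x⁻¹)) (x * (h * x⁻¹)) (k' * x) : ℂ) * (betaTw α (x * (g * x⁻¹)) (x * (h * x⁻¹)) (x) : ℂ) * (betaTw α (x * (g * x⁻¹)) (x) (h * (x⁻¹ * (k' * x))) : ℂ) * (betaTw α (x * (g * x⁻¹)) (x) (h) : ℂ) * (betaTw α (x * (g * x⁻¹)) (x) (x⁻¹ * (k' * x)) : ℂ)) * S4 + ((betaTw α (g) (x⁻¹ * (k' * x)) (h) : ℂ) * (betaTw α (g) (x⁻¹ * (k' * x)) (h) : ℂ) * (betaTw α (x * (g * x⁻¹)) (k' * x) (h) : ℂ) * (betaTw α (x * (g * x⁻¹)) (k') (x * h) : ℂ) * (betaTw α (x * (g * x⁻¹)) (k') (x * (h * x⁻¹)) : ℂ) * (betaTw α (x * (g * x⁻¹)) (k') (x) : ℂ) * (betaTw α (x * (g * x⁻¹)) (x * h) (x⁻¹ * (k' * x)) : ℂ) * (betaTw α (x * (g * x⁻¹)) (x * (h * x⁻¹)) (k' * x) : ℂ) * (betaTw α (x * (g * x⁻¹)) (x * (h * x⁻¹)) (x) : ℂ) * (betaTw α (x * (g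 * x⁻¹)) (x) (h * (x⁻¹ * (k' * x))) : ℂ) * (betaTw α (x * (g * x⁻¹)) (x) (h) : ℂ) * (betaTw α (x * (g * x⁻¹)) (x) (x⁻¹ * (k' * x)) : ℂ)) * S5 - ((betaTw α (g) (h) (x⁻¹ * (k' * x)) : ℂ) * (betaTw α (g) (x⁻¹ * (k' * x)) (h) : ℂ) * (betaTw α (g) (x⁻¹ * (k' * x)) (h) : ℂ) * (betaTw α (x * (g * x⁻¹)) (k') (x * h) : ℂ) * (betaTw α (x * (g * x⁻¹)) (k') (x) : ℂ) * (betaTw α (x * (g * x⁻¹)) (x * (h * x⁻¹)) (k' * x) : ℂ) * (betaTw α (x * (g * x⁻¹)) (x * (h * x⁻¹)) (k' * x) : ℂ) * (betaTw α (x * (g * x⁻¹)) (x * (h * x⁻¹)) (k') : ℂ) * (betaTw α (x * (g * x⁻¹)) (x) (h * (x⁻¹ * (k' * x))) : ℂ) * (betaTw α (x * (g * x⁻¹)) (x) (h * (x⁻¹ * (k' * x))) : ℂ) * (betaTw α (x * (g * x⁻¹)) (x) (h) : ℂ) * (betaTw α (x * (g * x⁻¹)) (x) (x⁻¹ * (k'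 * x)) : ℂ)) * S6 + ((betaTw α (g) (x⁻¹ * (k' * x)) (h) : ℂ) * (betaTw α (x * (g * x⁻¹)) (k' * x) (h) : ℂ) * (betaTw α (x * (g * x⁻¹)) (k') (x * h) : ℂ) * (betaTw α (x * (g * x⁻¹)) (k') (x * (h * x⁻¹)) : ℂ) * (betaTw α (x * (g * x⁻¹)) (k') (x) : ℂ) * (betaTw α (x * (g * x⁻¹)) (x * h) (x⁻¹ * (k' * x)) : ℂ) * (betaTw α (x * (g * x⁻¹)) (x * (h * x⁻¹)) (k' * x) : ℂ) * (betaTw α (x * (g * x⁻¹)) (x * (h * x⁻¹)) (k') : ℂ) * (betaTw α (x * (g * x⁻¹)) (x * (h * x⁻¹)) (x) : ℂ) * (betaTw α (x * (g * x⁻¹)) (x * (h * (x⁻¹ * k'))) (x) : ℂ) * (betaTw α (x * (g * x⁻¹)) (x) (h * (x⁻¹ * (k' * x))) : ℂ) * (betaTw α (x * (g * x⁻¹)) (x) (h) : ℂ) * (betaTw α (x * (g * x⁻¹)) (x) (x⁻¹ * (k' * x)) : ℂ)) * E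

theorem isBetaRegular_conj_iff {G : Type*} [Group G] (α : G → G → G → ℂˣ)
    (hα : IsNormalized3Cocycle α) (g x h : G) (hgh : h * g = g * h) :
    IsBetaRegular α g h ↔ IsBetaRegular α (x * g * x⁻¹) (x * h * x⁻¹) := by
  constructor
  · exact betaTw_fwd α hα g x h hgh
  · intro hr
    have hgh' : (x * h * x⁻¹) * (x * g * x⁻¹) = (x * g * x⁻¹) * (x * h * x⁻¹) := by
      rw [show (x * h * x⁻¹) * (x * g * x⁻¹) = x * (h * g) * x⁻¹ from by group, hgh]; group
    have := betaTw_fwd α hα (x * g * x⁻¹) x⁻¹ (x * h * x⁻¹) hgh' hr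
    rw [show x⁻¹ * (x * g * x⁻¹) * x⁻¹⁻¹ = g from by group,
        show x⁻¹ * (x * h * x⁻¹) * x⁻¹⁻¹ = h from by group] at this
    exact this
end

section
/- Let G be a group and α a normalized 3-cocycle on G. Then every g ∈ G is β_g-regular; that is, β_g(g,h) = β_g(h,g) for all h ∈ Z_g. -/
theorem self_isBetaRegular {G : Type*} [Group G] (α : G → G → G → ℂˣ)
    (hα : IsNormalized3Cocycle α) (g : G) :
    ∀ h : G, h * g = g * h → betaTw α g g h = betaTw α g h g := by
  intro h hc
  have key : h⁻¹ * g * h = g := by rw [mul_assoc, ← hc]; group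
  simp only [betaTw]
  rw [show h⁻¹ * g⁻¹ * g * g * h = h⁻¹ * g * h by group, key,
    show g⁻¹ * g * g = g by group,
    show g⁻¹ * h⁻¹ * g * h * g = g⁻¹ * (h⁻¹ * g * h) * g by group, key,
    show g⁻¹ * g * g = g by group]
  rw [mul_assoc, mul_comm (α g h g) ((α g g h)⁻¹), ← mul_assoc, mul_inv_cancel, one_mul,
    mul_assoc, mul_inv_cancel, mul_one]
end

section
/- Let G be a group and α a normalized 3-cocycle on G. For all g, h, x ∈ G with gh = hg, the following six-cocycle product identity holds: α(g, hx⁻¹, x) · α(h, gx⁻¹, x)⁻¹ · α(gx⁻¹, x, hx⁻¹)⁻¹ · α(hx⁻¹, x, gx⁻¹) · α(x, gx⁻¹, xhx⁻¹) · α(x, hx⁻¹, xgx⁻¹)⁻¹ = β_g(x⁻¹, xhx⁻¹) · β_g(h, x⁻¹)⁻¹. -/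
theorem torus_vertex_phase_eq_beta {G : Type*} [Group G] (α : G → G → G → ℂˣ)
    (hα : IsNormalized3Cocycle α) (g h x : G) (hgh : g * h = h * g) :
    α g (h * x⁻¹) x * (α h (g * x⁻¹) x)⁻¹ * (α (g * x⁻¹) x (h * x⁻¹))⁻¹ *
        α (h * x⁻¹) x (g * x⁻¹) * α x (g * x⁻¹) (x * h * x⁻¹) *
        (α x (h * x⁻¹) (x * g * x⁻¹))⁻¹ =
      betaTw α g x⁻¹ (x * h * x⁻¹) * (betaTw α g h x⁻¹)⁻¹ := by
  obtain ⟨hc, hn⟩ := hα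
  have n1 : ∀ a b : G, α 1 a b = 1 := fun a b => (hn a b).1
  have n2 : ∀ a b : G, α a 1 b = 1 := fun a b => (hn a b).2.1
  have n3 : ∀ a b : G, α a b 1 = 1 := fun a b => (hn a b).2.2
  have hg1 : h * g = g * h := hgh.symm
  have hg2 : ∀ z : G, h * (g * z) = g * (h * z) := fun z => by
    rw [← mul_assoc, hg1, mul_assoc]
  have hg4 : h⁻¹ * g = g * h⁻¹ := by
    rw [inv_mul_eq_iff_eq_mul, hg2, mul_inv_cancel, mul_one]
  have hg3 : ∀ z : G, h⁻¹ * (g * z) = g * (h⁻¹ * z) := fun z => by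
    rw [← mul_assoc, hg4, mul_assoc]
  have e1 := hc g h x⁻¹ x
  have e1' := hc h g x⁻¹ x
  have e2 := hc g x⁻¹ x (h * x⁻¹)
  have e2' := hc h x⁻¹ x (g * x⁻¹)
  have e3 := hc x⁻¹ x (g * x⁻¹) (x * h * x⁻¹)
  have e3' := hc x⁻¹ x (h * x⁻¹) (x * g * x⁻¹)
  simp only [betaTw, mul_assoc, mul_inv_rev, inv_inv, inv_mul_cancel, mul_inv_cancel,
    inv_mul_cancel_left, mul_inv_cancel_left, one_mul, mul_one, inv_one,
    hg1, hg2, hg3, hg4, n1, n2, n3] at e1 e1' e2 e2' e3 e3' ⊢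
  apply Additive.ofMul.injective
  have f1 := congrArg (⇑Additive.ofMul) e1
  have f1' := congrArg (⇑Additive.ofMul) e1'
  have f2 := congrArg (⇑Additive.ofMul) e2
  have f2' := congrArg (⇑Additive.ofMul) e2'
  have f3 := congrArg (⇑Additive.ofMul) e3
  have f3' := congrArg (⇑Additive.ofMul) e3'
  simp only [ofMul_mul, ofMul_inv, ofMul_one] at f1 f1' f2 f2' f3 f3' ⊢
  have comb := congrArg₂ (· - ·)
    (congrArg₂ (· + ·) (congrArg₂ (· + ·) f1 f2) f3)
    (congrArg₂ (· + ·) (congrArg₂ (· + ·) f1' f2') f3')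
  simp only [add_zero, sub_zero] at comb
  rw [← sub_eq_zero, ← comb]
  abel
end

section
/- Let G be a group and α a normalized 3-cocycle on G. For all g, h ∈ G with gh = hg and all x, y ∈ G: η^g(h, xy) = η^{ygy⁻¹}(yhy⁻¹, x) · η^g(h, y). (This identity expresses the multiplication law A^x A^y = A^{xy} of the torus vertex operators.) -/
/-- The phase `η^g(h,x) = β_g(x⁻¹, x h x⁻¹) · β_g(h, x⁻¹)⁻¹`. -/
def etaTw {G : Type*} [Group G] (α : G → G → G → ℂˣ) (g h x : G) : ℂˣ :=
  betaTw α g x⁻¹ (x * h * x⁻¹) * (betaTw α g h x⁻¹)⁻¹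

lemma cocyC {G : Type*} [Group G] {α : G → G → G → ℂˣ} (hα : IsNormalized3Cocycle α)
    (g₀ g₁ g₂ g₃ : G) :
    (α g₁ g₂ g₃ : ℂ) * (α g₀ (g₁ * g₂) g₃ : ℂ) * (α g₀ g₁ g₂ : ℂ) =
      (α (g₀ * g₁) g₂ g₃ : ℂ) * (α g₀ g₁ (g₂ * g₃) : ℂ) := by
  have h' := congrArg (Units.val) (hα.1 g₀ g₁ g₂ g₃)
  push_cast at h'
  field_simp at h'
  exact h'

lemma star {G : Type*} [Group G] {α : G → G → G → ℂˣ} (hα : IsNormalized3Cocycle α)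
    (a u v w : G) :
    betaTw α a u v * betaTw α a (u*v) w = betaTw α (u⁻¹*a*u) v w * betaTw α a u (v*w) := by
  have I1 := cocyC hα a u v w
  have I2 := cocyC hα u (u⁻¹*a*u) v w
  have I3 := cocyC hα u v ((u*v)⁻¹*a*(u*v)) w
  have I4 := cocyC hα u v w ((u*v*w)⁻¹*a*(u*v*w))
  rw [Units.ext_iff]
  push_cast [betaTw]
  simp only [mul_assoc, mul_inv_rev, inv_inv, inv_mul_cancel_left, mul_inv_cancel_left] at *
  field_simp
  have hN :
      (↑(α u v w) * (↑(α a (u * v) w) * ↑(α a u v))) *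
        ((↑(α (a * u) v w) * ↑(α u (u⁻¹ * (a * u)) (v * w))) *
          ((↑(α v (v⁻¹ * (u⁻¹ * (a * (u * v)))) w) *
              (↑(α u (u⁻¹ * (a * (u * v))) w) * ↑(α u v (v⁻¹ * (u⁻¹ * (a * (u * v))))))) *
            (↑(α (u * v) w (w⁻¹ * (v⁻¹ * (u⁻¹ * (a * (u * (v * w))))))) *
              ↑(α u v (v⁻¹ * (u⁻¹ * (a * (u * (v * w)))))))))
      = ((↑(α (a * u) v w) * ↑(α a u (v * w))) *
        ((↑(α (u⁻¹ * (a * u)) v w) *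
            (↑(α u (u⁻¹ * (a * (u * v))) w) * ↑(α u (u⁻¹ * (a * u)) v))) *
          ((↑(α (u * v) (v⁻¹ * (u⁻¹ * (a * (u * v)))) w) *
              ↑(α u v (v⁻¹ * (u⁻¹ * (a * (u * (v * w))))))) *
            (↑(α v w (w⁻¹ * (v⁻¹ * (u⁻¹ * (a * (u * (v * w))))))) *
              (↑(α u (v * w) (w⁻¹ * (v⁻¹ * (u⁻¹ * (a * (u * (v * w))))))) *
                ↑(α u v w))))) : ℂ) := by
    rw [I1, ← I2, I3, ← I4]
  refine mul_right_cancel₀ (b :=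
      ((↑(α (a * u) v w) * ↑(α a u (v * w))) *
        ((↑(α (u⁻¹ * (a * u)) v w) *
            (↑(α u (u⁻¹ * (a * (u * v))) w) * ↑(α u (u⁻¹ * (a * u)) v))) *
          ((↑(α (u * v) (v⁻¹ * (u⁻¹ * (a * (u * v)))) w) *
              ↑(α u v (v⁻¹ * (u⁻¹ * (a * (u * (v * w))))))) *
            (↑(α v w (w⁻¹ * (v⁻¹ * (u⁻¹ * (a * (u * (v * w))))))) *
              (↑(α u (v * w) (w⁻¹ * (v⁻¹ * (u⁻¹ * (a * (u * (v * w))))))) *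
                ↑(α u v w))))) : ℂ))
    (by apply_rules [mul_ne_zero, Units.ne_zero]) ?_
  linear_combination
    ((↑(α (u⁻¹ * (a * u)) v w) * ↑(α v w (w⁻¹ * (v⁻¹ * (u⁻¹ * (a * (u * (v * w))))))) *
      ↑(α a u (v * w)) * ↑(α u (v * w) (w⁻¹ * (v⁻¹ * (u⁻¹ * (a * (u * (v * w))))))) *
      ↑(α u (u⁻¹ * (a * u)) v) * ↑(α (u * v) (v⁻¹ * (u⁻¹ * (a * (u * v)))) w) : ℂ)) * hN

theorem etaTw_mul_law {G : Type*} [Group G] (α : G → G → G → ℂˣ)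
    (hα : IsNormalized3Cocycle α) (g h : G) (hgh : g * h = h * g) (x y : G) :
    etaTw α g h (x * y) =
      etaTw α (y * g * y⁻¹) (y * h * y⁻¹) x * etaTw α g h y := by
  have S1 := star hα g y⁻¹ x⁻¹ (x*(y*(h*(y⁻¹*x⁻¹))))
  have S2 := star hα g y⁻¹ (y*(h*y⁻¹)) x⁻¹
  have S3 := star hα g h y⁻¹ x⁻¹
  rw [Units.ext_iff]
  push_cast [etaTw]
  simp only [mul_assoc, mul_inv_rev, inv_inv, inv_mul_cancel_left, mul_inv_cancel_left] at *
  rw [hgh] at S3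
  simp only [inv_mul_cancel_left] at S3
  have s1 := congrArg (Units.val) S1
  have s2 := congrArg (Units.val) S2
  have s3 := congrArg (Units.val) S3
  push_cast at s1 s2 s3
  field_simp
  simp only [div_eq_mul_inv, mul_inv_rev, mul_assoc, inv_inv, one_div, one_mul, mul_one]
  have hN :
      ((↑(betaTw α g y⁻¹ x⁻¹) * ↑(betaTw α g (y⁻¹ * x⁻¹) (x * (y * (h * (y⁻¹ * x⁻¹)))))) *
        ((↑(betaTw α (y * (g * y⁻¹)) (y * (h * y⁻¹)) x⁻¹) *
            ↑(betaTw α g y⁻¹ (y * (h * (y⁻¹ * x⁻¹))))) *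
          (↑(betaTw α g h y⁻¹) * ↑(betaTw α g (h * y⁻¹) x⁻¹))) : ℂ)
      = ((↑(betaTw α (y * (g * y⁻¹)) x⁻¹ (x * (y * (h * (y⁻¹ * x⁻¹))))) *
            ↑(betaTw α g y⁻¹ (y * (h * (y⁻¹ * x⁻¹))))) *
        ((↑(betaTw α g y⁻¹ (y * (h * y⁻¹))) * ↑(betaTw α g (h * y⁻¹) x⁻¹)) *
          (↑(betaTw α g y⁻¹ x⁻¹) * ↑(betaTw α g h (y⁻¹ * x⁻¹)))) : ℂ) := by
    rw [s1, ← s2, s3]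
  refine mul_right_cancel₀ (b :=
      ((↑(betaTw α (y * (g * y⁻¹)) x⁻¹ (x * (y * (h * (y⁻¹ * x⁻¹))))) *
            ↑(betaTw α g y⁻¹ (y * (h * (y⁻¹ * x⁻¹))))) *
        ((↑(betaTw α g y⁻¹ (y * (h * y⁻¹))) * ↑(betaTw α g (h * y⁻¹) x⁻¹)) *
          (↑(betaTw α g y⁻¹ x⁻¹) * ↑(betaTw α g h (y⁻¹ * x⁻¹)))) : ℂ))
    (by apply_rules [mul_ne_zero, Units.ne_zero]) ?_
  linear_combination
    ((↑(betaTw α (y * (g * y⁻¹)) x⁻¹ (x * (y * (h * (y⁻¹ * x⁻¹))))) *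
      ↑(betaTw α g y⁻¹ (y * (h * y⁻¹))) * ↑(betaTw α g h (y⁻¹ * x⁻¹)) : ℂ)) * hN
end

section
/- Let G be a group and α a normalized 3-cocycle on G. For all g ∈ G, h₁, h₂ ∈ Z_g, and x ∈ G: η^g(h₁, x) · η^g(h₂, x) · η^g(h₁h₂, x)⁻¹ = β_{xgx⁻¹}(xh₁x⁻¹, xh₂x⁻¹) · β_g(h₁, h₂)⁻¹. -/
private lemma solve4 {M : Type*} [CommGroup M] {X Y c1 c2 c3 c4 : M}
    (h1 : c1 = 1) (h2 : c2 = 1) (h3 : c3 = 1) (h4 : c4 = 1)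
    (hk : X = Y * c1 * c2⁻¹ * c3 * c4⁻¹) : X = Y := by
  rw [h1, h2, h3, h4] at hk; simpa using hk

private lemma solve3eq {M : Type*} [CommGroup M] {X Y a1 b1 a2 b2 a3 b3 : M}
    (h1 : a1 = b1) (h2 : a2 = b2) (h3 : a3 = b3)
    (hk : X * (b1 * (a2 * b3)) = Y * (a1 * (b2 * a3))) : X = Y := by
  rw [h1, h2, h3] at hk; exact mul_right_cancel hk

/-- The DPR identity: `β_g(x,y) β_g(xy,z) = β_g(x,yz) β_{x⁻¹gx}(y,z)`. -/
lemma betaTw_mul {G : Type*} [Group G] (α : G → G → G → ℂˣ)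
    (hα : IsNormalized3Cocycle α) (g x y z : G) :
    betaTw α g x y * betaTw α g (x * y) z =
      betaTw α g x (y * z) * betaTw α (x⁻¹ * g * x) y z := by
  have c1 := hα.1 g x y z
  have c2 := hα.1 x (x⁻¹ * g * x) y z
  have c3 := hα.1 x y (y⁻¹ * (x⁻¹ * g * x) * y) z
  have c4 := hα.1 x y z (z⁻¹ * (y⁻¹ * (x⁻¹ * g * x) * y) * z)
  simp only [betaTw, mul_assoc, mul_inv_rev, inv_inv, mul_inv_cancel_left,
    inv_mul_cancel_left] at c1 c2 c3 c4 ⊢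
  refine solve4 c1 c2 c3 c4 ?_
  apply Additive.ofMul.injective
  simp only [ofMul_mul, ofMul_inv]
  abel

theorem etaTw_beta_conj_relation {G : Type*} [Group G] (α : G → G → G → ℂˣ)
    (hα : IsNormalized3Cocycle α) (g h₁ h₂ x : G)
    (h₁g : h₁ * g = g * h₁) (h₂g : h₂ * g = g * h₂) :
    etaTw α g h₁ x * etaTw α g h₂ x * (etaTw α g (h₁ * h₂) x)⁻¹ =
      betaTw α (x * g * x⁻¹) (x * h₁ * x⁻¹) (x * h₂ * x⁻¹) *
        (betaTw α g h₁ h₂)⁻¹ := by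
  have R1 := betaTw_mul α hα g x⁻¹ (x * h₁ * x⁻¹) (x * h₂ * x⁻¹)
  have R2 := betaTw_mul α hα g h₁ x⁻¹ (x * h₂ * x⁻¹)
  have R3 := betaTw_mul α hα g h₁ h₂ x⁻¹
  simp only [etaTw, mul_assoc, mul_inv_rev, inv_inv, mul_inv_cancel_left,
    inv_mul_cancel_left, ← h₁g] at R1 R2 R3 ⊢
  refine solve3eq R1 R2 R3 ?_
  apply Additive.ofMul.injective
  simp only [ofMul_mul, ofMul_inv]
  abel
end

section
/- Let G be a group, α a normalized 3-cocycle on G, g ∈ G, and ρ a β_g-representation of Z_g by invertible n×n complex matrices with ρ(e) = 1. If h ∈ Z_g is not β_g-regular, i.e. there exists k ∈ Z_{g,h} with β_g(k,h) ≠ β_g(h,k), then the trace of ρ(h) is zero. -/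
theorem trace_eq_zero_of_not_regular {G : Type*} [Group G] (n : ℕ)
    (α : G → G → G → ℂˣ) (hα : IsNormalized3Cocycle α) (g : G)
    (ρ : G → Matrix (Fin n) (Fin n) ℂ)
    (hinv : ∀ k : G, k * g = g * k → IsUnit (ρ k))
    (hrep : ∀ a b : G, a * g = g * a → b * g = g * b →
      ρ a * ρ b = (betaTw α g a b : ℂ) • ρ (a * b))
    (hone : ρ 1 = 1)
    (h : G) (hhg : h * g = g * h)
    (hirr : ∃ k : G, k * g = g * k ∧ k * h = h * k ∧
      betaTw α g k h ≠ betaTw α g h k) :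
    Matrix.trace (ρ h) = 0 := by
  obtain ⟨k, hkg, hkh, hne⟩ := hirr
  obtain ⟨U, hU⟩ := hinv k hkg
  set c : ℂˣ := betaTw α g k h * (betaTw α g h k)⁻¹ with hc
  have hcoef : (betaTw α g k h : ℂ) = (c : ℂ) * (betaTw α g h k : ℂ) := by
    rw [hc]; push_cast
    field_simp
  have h1 := hrep k h hkg hhg
  have h2 := hrep h k hhg hkg
  rw [hkh] at h1
  have key : ρ k * ρ h = (c : ℂ) • (ρ h * ρ k) := by
    rw [h1, h2, smul_smul, hcoef]
  set V : Matrix (Fin n) (Fin n) ℂ := ↑U⁻¹ with hV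
  have hUinv : V * ρ k = 1 := by
    rw [hV, ← hU]; exact U.inv_mul
  have hUinv' : ρ k * V = 1 := by
    rw [hV, ← hU]; exact U.mul_inv
  have key2 : ρ k * (ρ h * V) = (c : ℂ) • ρ h := by
    calc ρ k * (ρ h * V) = (ρ k * ρ h) * V := by rw [mul_assoc]
      _ = ((c : ℂ) • (ρ h * ρ k)) * V := by rw [key]
      _ = (c : ℂ) • (ρ h * (ρ k * V)) := by rw [smul_mul_assoc, mul_assoc]
      _ = (c : ℂ) • ρ h := by rw [hUinv', mul_one]
  have htr : Matrix.trace (ρ h) = (c : ℂ) * Matrix.trace (ρ h) := by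
    calc Matrix.trace (ρ h) = Matrix.trace (ρ h * (V * ρ k)) := by
          rw [hUinv, mul_one]
      _ = Matrix.trace ((ρ h * V) * ρ k) := by rw [mul_assoc]
      _ = Matrix.trace (ρ k * (ρ h * V)) := (Matrix.trace_mul_comm _ _).symm
      _ = Matrix.trace ((c : ℂ) • ρ h) := by rw [key2]
      _ = (c : ℂ) * Matrix.trace (ρ h) := by rw [Matrix.trace_smul]; rfl
  have hc1 : (c : ℂ) ≠ 1 := by
    intro hc1
    apply hne
    have : c = 1 := Units.ext (by simpa using hc1)
    rw [hc, mul_inv_eq_one] at this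
    exact this
  have := sub_eq_zero.mpr htr.symm
  rw [← sub_one_mul] at this
  rcases mul_eq_zero.mp this with h0 | h0
  · exact absurd (sub_eq_zero.mp h0) (by simpa using hc1)
  · exact h0
end

section
/- Let G be a group, α a normalized 3-cocycle on G, g ∈ G, and ρ a β_g-representation of Z_g by invertible n×n complex matrices. Then the matrix ρ(g) commutes with ρ(h) for every h ∈ Z_g: ρ(g)·ρ(h) = ρ(h)·ρ(g). -/
theorem rep_g_commutes {G : Type*} [Group G] (n : ℕ)
    (α : G → G → G → ℂˣ) (hα : IsNormalized3Cocycle α) (g : G)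
    (ρ : G → Matrix (Fin n) (Fin n) ℂ)
    (hinv : ∀ k : G, k * g = g * k → IsUnit (ρ k))
    (hrep : ∀ a b : G, a * g = g * a → b * g = g * b →
      ρ a * ρ b = (betaTw α g a b : ℂ) • ρ (a * b)) :
    ∀ h : G, h * g = g * h → ρ g * ρ h = ρ h * ρ g := by
  intro h hc
  have e1 : h⁻¹ * g * h = g := by
    rw [mul_assoc, ← hc, ← mul_assoc, inv_mul_cancel, one_mul]
  have hb : betaTw α g g h = betaTw α g h g := by
    unfold betaTw
    have e2 : h⁻¹ * g⁻¹ * g * g * h = g := by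
      rw [mul_assoc h⁻¹ g⁻¹ g, inv_mul_cancel, mul_one, e1]
    have e3 : g⁻¹ * h⁻¹ * g * h * g = g := by
      rw [show g⁻¹ * h⁻¹ * g * h * g = g⁻¹ * (h⁻¹ * g * h) * g by group, e1,
        inv_mul_cancel, one_mul]
    have e4 : g⁻¹ * g * g = g := by rw [inv_mul_cancel, one_mul]
    rw [e2, e3, e4, e1]
    rw [mul_comm (α g g h)]
    group
  rw [hrep g h rfl hc, hrep h g hc rfl, hc, hb]
end

section
/- Let G be a group, α a normalized 3-cocycle on G, and β : G × G → ℂˣ a normalized 2-cochain (β(e,x) = β(x,e) = 1 for all x ∈ G). Define the equivalent 3-cocycle α'(g₀,g₁,g₂) = α(g₀,g₁,g₂) · β(g₁,g₂)·β(g₀,g₁g₂)·β(g₀g₁,g₂)⁻¹·β(g₀,g₁)⁻¹, and let β'_a be the function built from α' in the same way β_a is built from α. Then for all a, b, c ∈ G: β'_a(b,c) = β_a(b,c) · ε_a(b) · ε_{b⁻¹ab}(c) · ε_a(bc)⁻¹, where ε_a(x) = β(x, x⁻¹ax) · β(a, x)⁻¹. (Equivalent 3-cocycles yield twisted 2-cocycles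 differing by the twisted 2-coboundary of ε.) -/
/-- The twisted 1-cochain `ε_a(x) = β(x, x⁻¹ a x) · β(a, x)⁻¹`. -/
def epsTw {G : Type*} [Group G] (β : G → G → ℂˣ) (a x : G) : ℂˣ :=
  β x (x⁻¹ * a * x) * (β a x)⁻¹

theorem betaTw_of_equivalent_cocycle {G : Type*} [Group G]
    (α : G → G → G → ℂˣ) (hα : IsNormalized3Cocycle α)
    (β : G → G → ℂˣ) (hβ : ∀ x : G, β 1 x = 1 ∧ β x 1 = 1) (a b c : G) :
    betaTw (fun g₀ g₁ g₂ =>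
        α g₀ g₁ g₂ *
          (β g₁ g₂ * β g₀ (g₁ * g₂) * (β (g₀ * g₁) g₂)⁻¹ * (β g₀ g₁)⁻¹))
        a b c =
      betaTw α a b c * epsTw β a b * epsTw β (b⁻¹ * a * b) c *
        (epsTw β a (b * c))⁻¹ := by
  simp only [betaTw, epsTw, mul_inv_rev, mul_assoc, inv_mul_cancel_left,
    mul_inv_cancel_left]
  ext
  push_cast
  field_simp
end

section
/- Let G be a group and let β_a, β'_a : G × G → ℂˣ (for each a ∈ G) be families of functions related by a twisted 2-coboundary: β'_a(x,y) = β_a(x,y) · ε_a(x) · ε_{x⁻¹ax}(y) · ε_a(xy)⁻¹ for all a,x,y ∈ G, for some family of functions ε_a : G → ℂˣ. Then for every g ∈ G, h ∈ Z_g, and x ∈ Z_{g,h}: β'_g(x⁻¹, h) · β'_g(h, x⁻¹)⁻¹ = β_g(x⁻¹, h) · β_g(h, x⁻¹)⁻¹. (The phases ρ^g(h,x), and hence the ground state degeneracy, are unchanged by a twisted 2-coboundary modification of the twisted 2-cocycles.) -/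
theorem rho_invariant_under_twisted_coboundary {G : Type*} [Group G]
    (β β' : G → G → G → ℂˣ) (ε : G → G → ℂˣ)
    (hrel : ∀ a x y : G,
      β' a x y = β a x y * ε a x * ε (x⁻¹ * a * x) y * (ε a (x * y))⁻¹)
    (g h x : G) (hhg : h * g = g * h) (hxg : x * g = g * x)
    (hxh : x * h = h * x) :
    β' g x⁻¹ h * (β' g h x⁻¹)⁻¹ = β g x⁻¹ h * (β g h x⁻¹)⁻¹ := by
  have h1 : x⁻¹⁻¹ * g * x⁻¹ = g := by
    rw [inv_inv, hxg, mul_inv_cancel_right]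
  have h2 : h⁻¹ * g * h = g := by
    rw [mul_assoc, ← hhg, inv_mul_cancel_left]
  have h3 : x⁻¹ * h = h * x⁻¹ := by
    have : Commute x h := hxh
    exact this.inv_left.eq
  rw [hrel, hrel, h1, h2, h3, mul_inv_rev, mul_inv_rev, mul_inv_rev, inv_inv]
  have := mul_comm (ε g x⁻¹) (ε g h)
  calc β g x⁻¹ h * ε g x⁻¹ * ε g h * (ε g (h * x⁻¹))⁻¹ *
        (ε g (h * x⁻¹) * ((ε g x⁻¹)⁻¹ * ((ε g h)⁻¹ * (β g h x⁻¹)⁻¹)))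
      = β g x⁻¹ h * (β g h x⁻¹)⁻¹ *
        (ε g x⁻¹ * (ε g x⁻¹)⁻¹) * (ε g h * (ε g h)⁻¹) *
        ((ε g (h * x⁻¹))⁻¹ * ε g (h * x⁻¹)) := by
        simp only [mul_comm, mul_left_comm, mul_assoc]
    _ = β g x⁻¹ h * (β g h x⁻¹)⁻¹ := by simp
end

section
/- Let m ≥ 1 and q be integers, and set f = m / gcd(q, m). Then (1/m³) · Σ_{g,h,x ∈ (ℤ/mℤ)³} exp( (2πi·q/m) · det M(g,h,x) ) = (m⁶/f³) · ∏_{p prime, p ∣ f} [ (p^{k_p} − 1)(1 + p⁻¹ + p⁻²) + 1 ], where M(g,h,x) is the 3×3 integer matrix whose rows are the standard representatives in {0,…,m−1}³ of g, h, x, and k_p is the multiplicity of p in the prime factorization of f. (This sum is the ground state degeneracy on the torus of the twisted quantum double model with group ℤ_m × ℤ_m × ℤ_m and 3-cocycle α_III^q(a,b,c) = exp(2πi·q·a₁b₂c₃/m), whose associated twisted 2-cocycle is β_a(b,c) = exp{(2πi·q/m)(a₁b₂c₃ − b₁a₂c₃ + b₁c₂a₃)}.) -/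
open Finset

/-- cross product of two triples over a commutative ring -/
def cross3 {R : Type*} [CommRing R] (h x : Fin 3 → R) : Fin 3 → R :=
  ![h 1 * x 2 - h 2 * x 1, h 2 * x 0 - h 0 * x 2, h 0 * x 1 - h 1 * x 0]

lemma cross3_eq_zero_iff {R : Type*} [CommRing R] (h x : Fin 3 → R) :
    cross3 h x = 0 ↔ ∀ a b : Fin 3, h a * x b = h b * x a := by
  constructor
  · intro hc a b
    have h0 := congrFun hc 0
    have h1 := congrFun hc 1
    have h2 := congrFun hc 2
    simp [cross3, sub_eq_zero] at h0 h1 h2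
    fin_cases a <;> fin_cases b <;> simp_all
  · intro H
    funext j
    fin_cases j <;> simp [cross3, sub_eq_zero] <;> [exact H 1 2; exact H 2 0; exact H 0 1]

lemma cross3_map {R S : Type*} [CommRing R] [CommRing S] (φ : R →+* S) (h x : Fin 3 → R) :
    cross3 (φ ∘ h) (φ ∘ x) = φ ∘ cross3 h x := by
  funext j
  fin_cases j <;> simp [cross3]

lemma cross3_smul_left {R : Type*} [CommRing R] (c : R) (h x : Fin 3 → R) :
    cross3 (fun i => c * h i) x = fun j => c * cross3 h x j := by
  funext j
  fin_cases j <;> simp [cross3] <;> ring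

lemma cross3_self_smul {R : Type*} [CommRing R] (t : R) (h : Fin 3 → R) :
    cross3 h (fun i => t * h i) = 0 := by
  funext j
  fin_cases j <;> simp [cross3] <;> ring

def solCount (R : Type*) [CommRing R] [Fintype R] [DecidableEq R] (h : Fin 3 → R) : ℕ :=
  (univ.filter fun x : Fin 3 → R => cross3 h x = 0).card

lemma solCount_of_isUnit {R : Type*} [CommRing R] [Fintype R] [DecidableEq R]
    (h : Fin 3 → R) (i₀ : Fin 3) (hu : IsUnit (h i₀)) :
    solCount R h = Fintype.card R := by
  obtain ⟨u, hu⟩ := hu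
  rw [solCount, ← Finset.card_univ]
  apply Finset.card_bij' (i := fun x _ => x i₀) (j := fun t _ => fun j => ((u⁻¹ : Rˣ) : R) * t * h j)
  · intro x hx
    exact Finset.mem_univ _
  · intro t _
    simp only [Finset.mem_filter, Finset.mem_univ, true_and]
    exact cross3_self_smul _ h
  · intro x hx
    simp only [Finset.mem_filter, Finset.mem_univ, true_and] at hx
    funext j
    have := (cross3_eq_zero_iff h x).1 hx i₀ j
    calc ((u⁻¹ : Rˣ) : R) * x i₀ * h j = ((u⁻¹ : Rˣ) : R) * (h j * x i₀) := by ring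
    _ = ((u⁻¹ : Rˣ) : R) * (h i₀ * x j) := by rw [← this]
    _ = (((u⁻¹ : Rˣ) : R) * h i₀) * x j := by ring
    _ = x j := by rw [← hu, Units.inv_mul, one_mul]
  · intro t _
    calc ((u⁻¹ : Rˣ) : R) * t * h i₀ = (((u⁻¹ : Rˣ) : R) * h i₀) * t := by ring
    _ = t := by rw [← hu, Units.inv_mul, one_mul]

def zmodCastEquiv {N M : ℕ} [NeZero N] [NeZero M] (hNM : N ∣ M) :
    ZMod M ≃ ZMod N × Fin (M / N) where
  toFun t := ((t.val : ZMod N), ⟨t.val / N,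
    Nat.div_lt_div_of_lt_of_dvd hNM (ZMod.val_lt t)⟩)
  invFun p := ((p.1.val + N * p.2.1 : ℕ) : ZMod M)
  left_inv t := by
    simp only [ZMod.val_natCast]
    rw [Nat.mod_add_div, ZMod.natCast_val, ZMod.cast_id]
  right_inv p := by
    obtain ⟨s, j⟩ := p
    have hN : 0 < N := Nat.pos_of_ne_zero (NeZero.ne N)
    have hlt : s.val + N * j.1 < M := by
      have h1 : s.val < N := ZMod.val_lt s
      have h2 : j.1 + 1 ≤ M / N := j.2
      calc s.val + N * j.1 < N + N * j.1 := by omega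
      _ = N * (j.1 + 1) := by ring
      _ ≤ N * (M / N) := Nat.mul_le_mul_left N h2
      _ = M := Nat.mul_div_cancel' hNM
    have hval : ((( s.val + N * j.1 : ℕ) : ZMod M)).val = s.val + N * j.1 :=
      ZMod.val_natCast_of_lt hlt
    ext
    · show ((((s.val + N * j.1 : ℕ) : ZMod M)).val : ZMod N) = s
      rw [hval]
      push_cast
      simp [ZMod.natCast_val, ZMod.cast_id, ZMod.natCast_self]
    · show (((s.val + N * j.1 : ℕ) : ZMod M)).val / N = j.1
      rw [hval, Nat.add_mul_div_left _ _ hN, Nat.div_eq_of_lt (ZMod.val_lt s), zero_add]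

lemma sum_zmod_castdown {N M : ℕ} [NeZero N] [NeZero M] (hNM : N ∣ M)
    {A : Type*} [AddCommMonoid A] (g : ZMod N → A) :
    ∑ t : ZMod M, g ((t.val : ZMod N)) = (M / N) • ∑ s : ZMod N, g s := by
  rw [← Equiv.sum_comp (zmodCastEquiv hNM).symm (fun t => g ((ZMod.val t : ZMod N)))]
  have : ∀ p : ZMod N × Fin (M / N),
      (((zmodCastEquiv hNM).symm p).val : ZMod N) = p.1 := by
    intro p
    have h := (zmodCastEquiv hNM).right_inv p
    have := congrArg Prod.fst h
    exact this
  simp_rw [this]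
  rw [Fintype.sum_prod_type_right]
  simp [Finset.sum_const, Finset.card_univ]

lemma sum_pi_zmod_castdown {N M : ℕ} [NeZero N] [NeZero M] (hNM : N ∣ M)
    {A : Type*} [AddCommMonoid A] (G : (Fin 3 → ZMod N) → A) :
    ∑ x : Fin 3 → ZMod M, G (fun i => ((x i).val : ZMod N)) =
      ((M / N) ^ 3) • ∑ x' : Fin 3 → ZMod N, G x' := by
  let E : (Fin 3 → ZMod M) ≃ ((Fin 3 → ZMod N) × (Fin 3 → Fin (M / N))) :=
  { toFun := fun x => (fun i => ((zmodCastEquiv hNM) (x i)).1, fun i => ((zmodCastEquiv hNM) (x i)).2)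
    invFun := fun p i => (zmodCastEquiv hNM).symm (p.1 i, p.2 i)
    left_inv := fun x => by
      funext i
      exact (zmodCastEquiv hNM).left_inv (x i)
    right_inv := fun p => by
      ext i
      · exact congrArg Prod.fst ((zmodCastEquiv hNM).right_inv (p.1 i, p.2 i))
      · exact congrArg (fun q => (Prod.snd q : Fin (M/N)).1) ((zmodCastEquiv hNM).right_inv (p.1 i, p.2 i)) }
  rw [← Equiv.sum_comp E.symm (fun x => G (fun i => ((x i).val : ZMod N)))]
  have key : ∀ p : (Fin 3 → ZMod N) × (Fin 3 → Fin (M / N)),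
      (fun i => (((E.symm p) i).val : ZMod N)) = p.1 := by
    intro p
    funext i
    exact congrFun (congrArg Prod.fst (E.right_inv p)) i
  simp_rw [key]
  rw [Fintype.sum_prod_type_right]
  simp [Finset.sum_const, Finset.card_univ, Fintype.card_fun]

lemma zmod_nonunit_iff {p k : ℕ} [Fact p.Prime] (a : ZMod (p ^ (k + 1))) :
    ¬ IsUnit a ↔ p ∣ a.val := by
  have hp : p.Prime := Fact.out
  have h1 : a = ((a.val : ℕ) : ZMod (p ^ (k + 1))) := by
    rw [ZMod.natCast_val, ZMod.cast_id]
  conv_lhs => rw [h1]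
  rw [ZMod.isUnit_iff_coprime, Nat.coprime_pow_right_iff (Nat.succ_pos k),
    Nat.coprime_comm, hp.coprime_iff_not_dvd, not_not]

/-- the multiplication-by-p equivalence onto nonunits -/
def pMulEquiv (p k : ℕ) [Fact p.Prime] :
    ZMod (p ^ k) ≃ {a : ZMod (p ^ (k + 1)) // p ∣ a.val} where
  toFun t := ⟨((p * t.val : ℕ) : ZMod (p ^ (k + 1))), by
    rw [ZMod.val_natCast_of_lt]
    · exact Dvd.intro _ rfl
    · have hv := ZMod.val_lt t
      have hp : 0 < p := (Fact.out : p.Prime).pos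
      calc p * t.val < p * p ^ k := (Nat.mul_lt_mul_left hp).2 hv
      _ = p ^ (k + 1) := (pow_succ' p k).symm⟩
  invFun a := ((a.1.val / p : ℕ) : ZMod (p ^ k))
  left_inv t := by
    have hp : 0 < p := (Fact.out : p.Prime).pos
    have hlt : p * t.val < p ^ (k + 1) := by
      have := ZMod.val_lt t
      calc p * t.val < p * p ^ k := (Nat.mul_lt_mul_left hp).2 this
      _ = p ^ (k + 1) := (pow_succ' p k).symm
    simp only [ZMod.val_natCast_of_lt hlt]
    rw [Nat.mul_div_cancel_left _ hp, ZMod.natCast_val, ZMod.cast_id]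
  right_inv a := by
    obtain ⟨a, ha⟩ := a
    have hp : 0 < p := (Fact.out : p.Prime).pos
    have hlt : a.val / p < p ^ k := by
      have := ZMod.val_lt a
      apply Nat.div_lt_of_lt_mul
      calc a.val < p ^ (k+1) := this
      _ = p * p ^ k := pow_succ' p k
    ext
    simp only [ZMod.val_natCast_of_lt hlt]
    rw [Nat.mul_div_cancel' ha, ZMod.natCast_val, ZMod.cast_id]

lemma card_nonunits (p k : ℕ) [Fact p.Prime] :
    Fintype.card {a : ZMod (p ^ (k + 1)) // p ∣ a.val} = p ^ k := by
  rw [← Fintype.card_congr (pMulEquiv p k), ZMod.card]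

lemma pmul_eq_zero {p k : ℕ} [Fact p.Prime] (w : ZMod (p ^ (k + 1))) :
    (p : ZMod (p ^ (k + 1))) * w = 0 ↔ ((w.val : ℕ) : ZMod (p ^ k)) = 0 := by
  have hp : 0 < p := (Fact.out : p.Prime).pos
  have h1 : (p : ZMod (p ^ (k + 1))) * w = ((p * w.val : ℕ) : ZMod (p ^ (k + 1))) := by
    rw [Nat.cast_mul, ZMod.natCast_val, ZMod.cast_id]
  rw [h1, ZMod.natCast_eq_zero_iff, ZMod.natCast_eq_zero_iff]
  have key : ∀ a : ℕ, (p ^ (k + 1) ∣ p * a ↔ p ^ k ∣ a) := by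
    intro a
    rw [pow_succ', Nat.mul_dvd_mul_iff_left hp]
  exact key w.val

def FF (n : ℕ) [NeZero n] : ℕ := ∑ h : Fin 3 → ZMod n, solCount (ZMod n) h

lemma FF_one : FF 1 = 1 := by decide

lemma solCount_pmul {p k : ℕ} [Fact p.Prime] (t : Fin 3 → ZMod (p ^ k)) :
    solCount (ZMod (p ^ (k + 1))) (fun i => ((p * (t i).val : ℕ) : ZMod (p ^ (k + 1)))) =
      p ^ 3 * solCount (ZMod (p ^ k)) t := by
  have hp : p.Prime := Fact.out
  set h : Fin 3 → ZMod (p ^ (k + 1)) := fun i => ((p * (t i).val : ℕ) : ZMod (p ^ (k + 1))) with hh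
  have hdvd : (p : ℕ) ^ k ∣ p ^ (k + 1) := pow_dvd_pow p (Nat.le_succ k)
  let φ : ZMod (p ^ (k + 1)) →+* ZMod (p ^ k) := ZMod.castHom hdvd _
  have hφ : ∀ w : ZMod (p ^ (k + 1)), φ w = ((w.val : ℕ) : ZMod (p ^ k)) := by
    intro w
    rw [ZMod.castHom_apply, ← ZMod.natCast_val]
  have key : ∀ x : Fin 3 → ZMod (p ^ (k + 1)),
      (cross3 h x = 0 ↔ cross3 t (fun i => (((x i).val : ℕ) : ZMod (p ^ k))) = 0) := by
    intro x
    have hlift : h = fun i => (p : ZMod (p ^ (k + 1))) * (((t i).val : ℕ) : ZMod (p ^ (k + 1))) := by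
      funext i
      show ((p * (t i).val : ℕ) : ZMod (p ^ (k + 1))) = _
      push_cast
      rfl
    set L : Fin 3 → ZMod (p ^ (k + 1)) := fun i => (((t i).val : ℕ) : ZMod (p ^ (k + 1))) with hL
    have h2 : cross3 h x = fun j => (p : ZMod (p ^ (k + 1))) * cross3 L x j := by
      rw [hlift]; exact cross3_smul_left _ _ _
    have hφL : φ ∘ L = t := by
      funext i
      simp only [Function.comp, hL, hφ]
      rw [ZMod.val_natCast, Nat.mod_eq_of_lt (lt_of_lt_of_le (ZMod.val_lt _) (Nat.pow_le_pow_right hp.pos (Nat.le_succ k)))]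
      rw [ZMod.natCast_val, ZMod.cast_id]
    have hcm : ∀ j, φ (cross3 L x j) = cross3 t (fun i => (((x i).val : ℕ) : ZMod (p ^ k))) j := by
      intro j
      have h3 : (⇑φ ∘ x) = fun i => (((x i).val : ℕ) : ZMod (p ^ k)) := funext fun i => hφ (x i)
      have h4 := congrFun (cross3_map φ L x) j
      rw [hφL, h3] at h4
      exact h4.symm
    simp only [h2, funext_iff, Pi.zero_apply]
    constructor
    · intro H j
      have := (pmul_eq_zero (cross3 L x j)).1 (H j)
      rw [← hφ, hcm] at this
      simpa using this
    · intro H j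
      rw [pmul_eq_zero, ← hφ, hcm]
      simpa using H j
  rw [solCount, Finset.card_filter]
  have hsum : (∑ x : Fin 3 → ZMod (p ^ (k + 1)), if cross3 h x = 0 then 1 else 0) =
      ∑ x : Fin 3 → ZMod (p ^ (k + 1)),
        if cross3 t (fun i => (((x i).val : ℕ) : ZMod (p ^ k))) = 0 then (1 : ℕ) else 0 :=
    Finset.sum_congr rfl (fun x _ => if_congr (key x) rfl rfl)
  rw [hsum]
  have := sum_pi_zmod_castdown (N := p ^ k) (M := p ^ (k + 1)) hdvd (A := ℕ)
    (fun x' => if cross3 t x' = 0 then 1 else 0)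
  rw [this]
  have hdiv : p ^ (k + 1) / p ^ k = p := by
    rw [Nat.pow_div (Nat.le_succ k) hp.pos]
    simp
  rw [hdiv, smul_eq_mul, solCount, Finset.card_filter]

lemma FF_succ (p k : ℕ) [Fact p.Prime] :
    FF (p ^ (k + 1)) = (p ^ (3 * (k + 1)) - p ^ (3 * k)) * p ^ (k + 1) + p ^ 3 * FF (p ^ k) := by
  classical
  have hp : p.Prime := Fact.out
  rw [FF, ← Finset.sum_filter_add_sum_filter_not Finset.univ (fun h => ∀ i, p ∣ (h i).val)]
  have hcards : (Finset.univ.filter (fun h : Fin 3 → ZMod (p ^ (k + 1)) => ∀ i, p ∣ (h i).val)).card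
      = p ^ (3 * k) := by
    rw [← Fintype.card_subtype]
    rw [Fintype.card_congr (Equiv.subtypePiEquivPi (p := fun _ a => p ∣ ZMod.val a))]
    rw [Fintype.card_pi]
    simp [card_nonunits p k, ← pow_mul, Nat.mul_comm]
  -- second part: nonunit-free h have a unit coordinate
  have part1 : ∑ h ∈ Finset.univ.filter (fun h : Fin 3 → ZMod (p ^ (k + 1)) => ¬ ∀ i, p ∣ (h i).val),
      solCount (ZMod (p ^ (k + 1))) h = (p ^ (3 * (k + 1)) - p ^ (3 * k)) * p ^ (k + 1) := by
    rw [Finset.sum_congr rfl (fun h hmem => ?_), Finset.sum_const, smul_eq_mul]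
    · congr 1
      rw [Finset.filter_not, Finset.card_sdiff_of_subset (Finset.filter_subset _ _), hcards]
      congr 1
      rw [Finset.card_univ, Fintype.card_fun, ZMod.card, Fintype.card_fin, ← pow_mul,
        Nat.mul_comm]
    · simp only [Finset.mem_filter, Finset.mem_univ, true_and, not_forall] at hmem
      obtain ⟨i, hi⟩ := hmem
      rw [solCount_of_isUnit _ i (by by_contra hc; exact hi ((zmod_nonunit_iff _).1 hc)), ZMod.card]
  rw [part1, add_comm]
  congr 1
  -- first part: all-nonunit h
  let EPi : (Fin 3 → ZMod (p ^ k)) ≃ {h : Fin 3 → ZMod (p ^ (k + 1)) // ∀ i, p ∣ (h i).val} :=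
    (Equiv.piCongrRight (fun _ => pMulEquiv p k)).trans (Equiv.subtypePiEquivPi).symm
  rw [Finset.sum_subtype (Finset.univ.filter _)
    (by intro x; simp : ∀ x : Fin 3 → ZMod (p ^ (k + 1)),
      x ∈ Finset.univ.filter (fun h => ∀ i, p ∣ (h i).val) ↔ ∀ i, p ∣ (x i).val)
    (fun h => solCount (ZMod (p ^ (k + 1))) h)]
  rw [← Equiv.sum_comp EPi (fun a => solCount (ZMod (p ^ (k + 1))) a.1)]
  have hEPi : ∀ t : Fin 3 → ZMod (p ^ k),
      ((EPi t : {h : Fin 3 → ZMod (p ^ (k + 1)) // ∀ i, p ∣ (h i).val}) : Fin 3 → ZMod (p ^ (k + 1))) =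
        fun i => ((p * (t i).val : ℕ) : ZMod (p ^ (k + 1))) := by
    intro t
    rfl
  simp_rw [hEPi]
  unfold FF
  rw [Finset.mul_sum]
  exact Finset.sum_congr rfl (fun t _ => solCount_pmul t)

lemma FF_pow_complex (p k : ℕ) [Fact p.Prime] :
    (FF (p ^ k) : ℂ) =
      (p : ℂ) ^ (3 * k) * (((p : ℂ) ^ k - 1) * (1 + (p : ℂ)⁻¹ + ((p : ℂ) ^ 2)⁻¹) + 1) := by
  have hp : p.Prime := Fact.out
  have hc : (p : ℂ) ≠ 0 := Nat.cast_ne_zero.mpr hp.ne_zero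
  induction k with
  | zero => simp [FF_one]
  | succ k ih =>
    rw [FF_succ p k]
    have hle : p ^ (3 * k) ≤ p ^ (3 * (k + 1)) :=
      Nat.pow_le_pow_right hp.pos (by omega)
    push_cast [Nat.cast_sub hle]
    rw [ih]
    field_simp
    ring

lemma cross3_prod {S T : Type*} [CommRing S] [CommRing T]
    (h₁ x₁ : Fin 3 → S) (h₂ x₂ : Fin 3 → T) :
    cross3 (fun i => (h₁ i, h₂ i)) (fun i => (x₁ i, x₂ i)) =
      fun j => (cross3 h₁ x₁ j, cross3 h₂ x₂ j) := by
  funext j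
  fin_cases j <;> rfl

lemma cross3_zero_iff_pair {R S T : Type*} [CommRing R] [CommRing S] [CommRing T]
    (e : R ≃+* S × T) (f g : Fin 3 → R) :
    cross3 f g = 0 ↔
      cross3 (fun i => (e (f i)).1) (fun i => (e (g i)).1) = 0 ∧
      cross3 (fun i => (e (f i)).2) (fun i => (e (g i)).2) = 0 := by
  have h1 := cross3_map ((RingHom.fst S T).comp e.toRingHom) f g
  have h2 := cross3_map ((RingHom.snd S T).comp e.toRingHom) f g
  constructor
  · intro h
    constructor
    · show cross3 ((⇑((RingHom.fst S T).comp e.toRingHom)) ∘ f)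
        ((⇑((RingHom.fst S T).comp e.toRingHom)) ∘ g) = 0
      rw [h1, h]
      funext j; simp
    · show cross3 ((⇑((RingHom.snd S T).comp e.toRingHom)) ∘ f)
        ((⇑((RingHom.snd S T).comp e.toRingHom)) ∘ g) = 0
      rw [h2, h]
      funext j; simp
  · rintro ⟨ha, hb⟩
    funext j
    simp only [Pi.zero_apply]
    apply e.injective
    rw [map_zero, Prod.ext_iff]
    constructor
    · calc (e (cross3 f g j)).1
          = cross3 (fun i => (e (f i)).1) (fun i => (e (g i)).1) j := (congrFun h1 j).symm
      _ = 0 := by rw [ha]; simp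
    · calc (e (cross3 f g j)).2
          = cross3 (fun i => (e (f i)).2) (fun i => (e (g i)).2) j := (congrFun h2 j).symm
      _ = 0 := by rw [hb]; simp

def piProdEquiv3 {α β γ : Type*} (e : α ≃ β × γ) :
    (Fin 3 → α) ≃ (Fin 3 → β) × (Fin 3 → γ) where
  toFun x := (fun i => (e (x i)).1, fun i => (e (x i)).2)
  invFun p i := e.symm (p.1 i, p.2 i)
  left_inv x := funext fun i => by simp
  right_inv p := by
    ext i <;> simp

lemma FF_eq_card (n : ℕ) [NeZero n] :
    FF n = Fintype.card
      {hx : (Fin 3 → ZMod n) × (Fin 3 → ZMod n) // cross3 hx.1 hx.2 = 0} := by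
  classical
  rw [Fintype.card_subtype]
  unfold FF solCount
  simp_rw [Finset.card_filter]
  rw [Fintype.sum_prod_type]

lemma FF_mul (a b : ℕ) [NeZero a] [NeZero b] (hab : Nat.Coprime a b) :
    FF (a * b) = FF a * FF b := by
  haveI : NeZero (a * b) := ⟨mul_ne_zero (NeZero.ne a) (NeZero.ne b)⟩
  classical
  rw [FF_eq_card, FF_eq_card, FF_eq_card, ← Fintype.card_prod]
  apply Fintype.card_congr
  let e := (ZMod.chineseRemainder hab).toEquiv
  let W := piProdEquiv3 e
  let B : ((Fin 3 → ZMod (a * b)) × (Fin 3 → ZMod (a * b))) ≃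
      (((Fin 3 → ZMod a) × (Fin 3 → ZMod a)) × ((Fin 3 → ZMod b) × (Fin 3 → ZMod b))) :=
    (Equiv.prodCongr W W).trans (Equiv.prodProdProdComm _ _ _ _)
  refine (Equiv.subtypeEquiv B ?_).trans (Equiv.subtypeProdEquivProd)
  intro s
  exact cross3_zero_iff_pair (ZMod.chineseRemainder hab) s.1 s.2

lemma FF_formula (f : ℕ) [NeZero f] :
    (FF f : ℂ) = (f : ℂ) ^ 3 * ∏ p ∈ f.primeFactors,
      (((p : ℂ) ^ (f.factorization p) - 1) * (1 + (p : ℂ)⁻¹ + ((p : ℂ) ^ 2)⁻¹) + 1) := by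
  classical
  set G : ℕ → ℕ := fun n => if h : n = 0 then 0 else @FF n ⟨h⟩ with hG
  have hGn : ∀ (n : ℕ) [NeZero n], G n = FF n := by
    intro n hn
    simp only [hG, dif_neg (NeZero.ne n)]
  have hG1 : G 1 = 1 := by rw [hGn 1, FF_one]
  have hmult : ∀ x y, Nat.Coprime x y → G (x * y) = G x * G y := by
    intro x y hxy
    rcases Nat.eq_zero_or_pos x with hx | hx
    · subst hx
      have : y = 1 := by simpa [Nat.coprime_zero_left] using hxy
      subst this
      simp [hG]
    rcases Nat.eq_zero_or_pos y with hy | hy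
    · subst hy
      have : x = 1 := by simpa [Nat.coprime_zero_right] using hxy
      subst this
      simp [hG]
    haveI : NeZero x := ⟨hx.ne'⟩
    haveI : NeZero y := ⟨hy.ne'⟩
    haveI : NeZero (x * y) := ⟨mul_ne_zero hx.ne' hy.ne'⟩
    rw [hGn, hGn, hGn]
    exact FF_mul x y hxy
  have h2 := Nat.multiplicative_factorization G hmult hG1 (NeZero.ne f)
  rw [Nat.prod_factorization_eq_prod_primeFactors] at h2
  have h3 : (FF f : ℂ) = ∏ p ∈ f.primeFactors, (G (p ^ f.factorization p) : ℂ) := by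
    rw [← Nat.cast_prod, ← h2, hGn]
  rw [h3]
  have h4 : ∀ p ∈ f.primeFactors, (G (p ^ f.factorization p) : ℂ) =
      (p : ℂ) ^ (3 * f.factorization p) *
        (((p : ℂ) ^ (f.factorization p) - 1) * (1 + (p : ℂ)⁻¹ + ((p : ℂ) ^ 2)⁻¹) + 1) := by
    intro p hp
    have hpp : p.Prime := Nat.prime_of_mem_primeFactors hp
    haveI : Fact p.Prime := ⟨hpp⟩
    haveI : NeZero (p ^ f.factorization p) := ⟨pow_ne_zero _ hpp.ne_zero⟩
    rw [hGn]
    exact FF_pow_complex p (f.factorization p)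
  rw [Finset.prod_congr rfl h4, Finset.prod_mul_distrib]
  congr 1
  have h5 : ∏ p ∈ f.primeFactors, p ^ f.factorization p = f := by
    rw [← Nat.prod_factorization_eq_prod_primeFactors]
    exact Nat.factorization_prod_pow_eq_self (NeZero.ne f)
  calc ∏ p ∈ f.primeFactors, (p : ℂ) ^ (3 * f.factorization p)
      = ∏ p ∈ f.primeFactors, ((p ^ f.factorization p : ℕ) : ℂ) ^ 3 := by
        apply Finset.prod_congr rfl
        intro p _
        rw [Nat.cast_pow, ← pow_mul, Nat.mul_comm]
  _ = ((∏ p ∈ f.primeFactors, p ^ f.factorization p : ℕ) : ℂ) ^ 3 := by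
        rw [Nat.cast_prod, Finset.prod_pow]
  _ = (f : ℂ) ^ 3 := by rw [h5]

open Complex in
lemma sum_pow_val {n : ℕ} [NeZero n] (w : ℂ) (hw : w ^ n = 1) :
    ∑ t : ZMod n, w ^ t.val = if w = 1 then (n : ℂ) else 0 := by
  have hre : ∑ t : ZMod n, w ^ t.val = ∑ j ∈ Finset.range n, w ^ j := by
    refine Finset.sum_nbij' (i := fun t => t.val) (j := fun j => (j : ZMod n))
      (fun t _ => Finset.mem_range.mpr (ZMod.val_lt t))
      (fun j _ => Finset.mem_univ _)
      (fun t _ => by show ((t.val : ℕ) : ZMod n) = t; rw [ZMod.natCast_val, ZMod.cast_id])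
      (fun j hj => by show ((j : ZMod n)).val = j; rw [ZMod.val_natCast_of_lt (Finset.mem_range.mp hj)])
      (fun t _ => rfl)
  rw [hre]
  split_ifs with h1
  · simp [h1]
  · rw [geom_sum_eq h1, hw]
    simp

open Complex in
lemma exp_pow_m (m : ℕ) [NeZero m] (q c : ℤ) :
    (Complex.exp (2 * Real.pi * Complex.I * (q : ℂ) / (m : ℂ) * (c : ℂ))) ^ m = 1 := by
  rw [← Complex.exp_nat_mul]
  have hm : (m : ℂ) ≠ 0 := Nat.cast_ne_zero.mpr (NeZero.ne m)
  have : (m : ℂ) * (2 * Real.pi * Complex.I * (q : ℂ) / (m : ℂ) * (c : ℂ)) =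
      ((q * c : ℤ) : ℂ) * (2 * Real.pi * Complex.I) := by
    field_simp
    push_cast
    ring
  rw [this, Complex.exp_int_mul_two_pi_mul_I]

open Complex in
lemma exp_eq_one_iff_dvd (m : ℕ) [NeZero m] (q c : ℤ) :
    Complex.exp (2 * Real.pi * Complex.I * (q : ℂ) / (m : ℂ) * (c : ℂ)) = 1 ↔
      (m : ℤ) ∣ q * c := by
  rw [Complex.exp_eq_one_iff]
  have hm : (m : ℂ) ≠ 0 := Nat.cast_ne_zero.mpr (NeZero.ne m)
  have hpi : (Real.pi : ℂ) ≠ 0 := Complex.ofReal_ne_zero.mpr Real.pi_ne_zero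
  have h2 : (2 : ℂ) * Real.pi * Complex.I ≠ 0 := by
    simp [hpi, Complex.I_ne_zero]
  constructor
  · rintro ⟨n, hn⟩
    refine ⟨n, ?_⟩
    field_simp at hn
    have h3 : (2 * Real.pi * Complex.I) * ((q : ℂ) * c) =
        (2 * Real.pi * Complex.I) * ((n : ℂ) * m) := by linear_combination (2 * Real.pi * Complex.I) * hn
    have h4 := mul_left_cancel₀ h2 h3
    have h5 : ((q * c : ℤ) : ℂ) = ((n * m : ℤ) : ℂ) := by push_cast; exact h4
    have h6 : q * c = n * m := by exact_mod_cast h5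
    rw [h6, mul_comm]
  · rintro ⟨n, hn⟩
    refine ⟨n, ?_⟩
    have hC : (q : ℂ) * c = (m : ℂ) * n := by exact_mod_cast congrArg (Int.cast : ℤ → ℂ) hn
    rw [div_mul_eq_mul_div, div_eq_iff hm]
    linear_combination (2 * (Real.pi : ℂ) * Complex.I) * hC

lemma dvd_iff_gcd_div (m : ℕ) [NeZero m] (q c : ℤ) :
    (m : ℤ) ∣ q * c ↔ ((m / Int.gcd q m : ℕ) : ℤ) ∣ c := by
  set d := Int.gcd q m with hd
  have hd0 : d ≠ 0 := by
    intro h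
    exact NeZero.ne m (by exact_mod_cast (Int.gcd_eq_zero_iff.mp h).2)
  have hdq : (d : ℤ) ∣ q := Int.gcd_dvd_left q m
  have hdm : (d : ℤ) ∣ (m : ℤ) := Int.gcd_dvd_right q m
  have hdmn : d ∣ m := by exact_mod_cast hdm
  have hfZ : ((m / d : ℕ) : ℤ) = (m : ℤ) / (d : ℤ) := by
    rw [Int.natCast_div]
  have hm : (m : ℤ) = (d : ℤ) * ((m / d : ℕ) : ℤ) := by
    exact_mod_cast (Nat.mul_div_cancel' hdmn).symm
  have hq : q = (d : ℤ) * (q / d) := by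
    rw [mul_comm]
    exact (Int.ediv_mul_cancel hdq).symm
  have hcop : Int.gcd (q / (d : ℤ)) ((m / d : ℕ) : ℤ) = 1 := by
    rw [hfZ, hd]
    exact Int.gcd_div_gcd_div_gcd (Nat.pos_of_ne_zero hd0)
  have hdZ : (d : ℤ) ≠ 0 := Int.natCast_ne_zero.mpr hd0
  constructor
  · intro h
    rw [hm, hq] at h
    have h2 : ((m / d : ℕ) : ℤ) ∣ (q / (d : ℤ)) * c := by
      have h3 : (d : ℤ) * ((m / d : ℕ) : ℤ) ∣ (d : ℤ) * ((q / (d : ℤ)) * c) := by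
        convert h using 1
        ring
      exact (mul_dvd_mul_iff_left hdZ).mp h3
    exact (Int.isCoprime_iff_gcd_eq_one.mpr hcop).symm.dvd_of_dvd_mul_left h2
  · intro h
    rw [hm]
    have h2 : (d : ℤ) * ((m / d : ℕ) : ℤ) ∣ (d : ℤ) * ((q / (d : ℤ)) * c) :=
      mul_dvd_mul_left _ (h.trans (dvd_mul_left c _))
    have h3 : q * c = (d : ℤ) * ((q / (d : ℤ)) * c) := by
      conv_lhs => rw [hq]
      ring
    rw [h3]
    exact h2

theorem gsd_ZmZmZm_typeIII (m : ℕ) [NeZero m] (q : ℤ) :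
    ((m : ℂ) ^ 3)⁻¹ *
        ∑ g : Fin 3 → ZMod m, ∑ h : Fin 3 → ZMod m, ∑ x : Fin 3 → ZMod m,
          Complex.exp (2 * Real.pi * Complex.I * (q : ℂ) / (m : ℂ) *
            (((Matrix.of fun i j : Fin 3 =>
                ((((![g, h, x] : Fin 3 → Fin 3 → ZMod m) i j).val : ℤ))).det : ℂ))) =
      ((m : ℂ) ^ 6 / ((m / Int.gcd q m : ℕ) : ℂ) ^ 3) *
        ∏ p ∈ (m / Int.gcd q m).primeFactors,
          (((p : ℂ) ^ ((m / Int.gcd q m).factorization p) - 1) *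
              (1 + (p : ℂ)⁻¹ + ((p : ℂ) ^ 2)⁻¹) + 1) := by
  classical
  have hd0 : Int.gcd q m ≠ 0 := fun h =>
    NeZero.ne m (by exact_mod_cast (Int.gcd_eq_zero_iff.mp h).2)
  have hdm : Int.gcd q m ∣ m := by
    exact_mod_cast (Int.gcd_dvd_right q m : (Int.gcd q m : ℤ) ∣ (m : ℤ))
  set d := Int.gcd q m with hdd
  set f := m / d with hff
  have hmdf : m = d * f := (Nat.mul_div_cancel' hdm).symm
  have hf0 : f ≠ 0 := by
    intro h
    exact NeZero.ne m (by rw [hmdf, h, mul_zero])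
  haveI : NeZero f := ⟨hf0⟩
  have hfm : f ∣ m := ⟨d, by rw [hmdf]; ring⟩
  have hmf : m / f = d := Nat.div_div_self hdm (NeZero.ne m)
  set cz : (Fin 3 → ZMod m) → (Fin 3 → ZMod m) → Fin 3 → ℤ := fun h x =>
    cross3 (fun i => ((h i).val : ℤ)) (fun i => ((x i).val : ℤ)) with hcz
  -- step 1 : compute the innermost (g) sum
  have step1 : (∑ g : Fin 3 → ZMod m, ∑ h : Fin 3 → ZMod m, ∑ x : Fin 3 → ZMod m,
      Complex.exp (2 * Real.pi * Complex.I * (q : ℂ) / (m : ℂ) *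
        (((Matrix.of fun i j : Fin 3 =>
            ((((![g, h, x] : Fin 3 → Fin 3 → ZMod m) i j).val : ℤ))).det : ℂ)))) =
      ∑ h : Fin 3 → ZMod m, ∑ x : Fin 3 → ZMod m,
        (m : ℂ) ^ 3 * (if (∀ i, (f : ℤ) ∣ cz h x i) then 1 else 0) := by
    rw [Finset.sum_comm]
    apply Finset.sum_congr rfl
    intro h _
    rw [Finset.sum_comm]
    apply Finset.sum_congr rfl
    intro x _
    calc (∑ g : Fin 3 → ZMod m,
        Complex.exp (2 * Real.pi * Complex.I * (q : ℂ) / (m : ℂ) *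
          (((Matrix.of fun i j : Fin 3 =>
              ((((![g, h, x] : Fin 3 → Fin 3 → ZMod m) i j).val : ℤ))).det : ℂ))))
        = ∑ g : Fin 3 → ZMod m, ∏ i : Fin 3,
            (Complex.exp (2 * Real.pi * Complex.I * (q : ℂ) / (m : ℂ) *
              ((cz h x i : ℤ) : ℂ))) ^ ((g i).val) := by
          apply Finset.sum_congr rfl
          intro g _
          have hdet : (Matrix.of fun i j : Fin 3 =>
              ((((![g, h, x] : Fin 3 → Fin 3 → ZMod m) i j).val : ℤ))).det =
              ∑ i : Fin 3, ((g i).val : ℤ) * cz h x i := by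
            rw [Matrix.det_fin_three]
            simp only [Matrix.of_apply, Matrix.cons_val_zero, Matrix.cons_val_one,
              Matrix.head_cons, Matrix.cons_val_two, Matrix.tail_cons, hcz, cross3,
              Fin.sum_univ_three, Matrix.cons_val_fin_one]
            ring
          rw [hdet]
          push_cast
          rw [Finset.mul_sum, Complex.exp_sum]
          apply Finset.prod_congr rfl
          intro i _
          rw [← Complex.exp_nat_mul]
          congr 1
          ring
    _ = ∏ i : Fin 3, ∑ t : ZMod m,
          (Complex.exp (2 * Real.pi * Complex.I * (q : ℂ) / (m : ℂ) *
            ((cz h x i : ℤ) : ℂ))) ^ (t.val) := by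
          rw [Finset.prod_univ_sum]
          rw [Fintype.piFinset_univ]
    _ = ∏ i : Fin 3, (if (f : ℤ) ∣ cz h x i then (m : ℂ) else 0) := by
          apply Finset.prod_congr rfl
          intro i _
          rw [sum_pow_val _ (exp_pow_m m q (cz h x i))]
          exact if_congr ((exp_eq_one_iff_dvd m q (cz h x i)).trans
            (dvd_iff_gcd_div m q (cz h x i))) rfl rfl
    _ = (m : ℂ) ^ 3 * (if (∀ i, (f : ℤ) ∣ cz h x i) then 1 else 0) := by
          have h1 : ∀ i : Fin 3, (if (f : ℤ) ∣ cz h x i then (m : ℂ) else 0) =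
              (m : ℂ) * (if (f : ℤ) ∣ cz h x i then 1 else 0) := by
            intro i
            split_ifs <;> simp
          rw [Finset.prod_congr rfl (fun i _ => h1 i), Finset.prod_mul_distrib,
            Finset.prod_const, Finset.prod_boole]
          simp [Finset.card_univ]
  rw [step1]
  -- step 2 : condition as vanishing cross product over ZMod f
  have hpred : ∀ h x : Fin 3 → ZMod m, (∀ i, (f : ℤ) ∣ cz h x i) ↔
      cross3 (fun i => (((h i).val : ℕ) : ZMod f)) (fun i => (((x i).val : ℕ) : ZMod f)) = 0 := by
    intro h x
    have hkey : ∀ i, cross3 (fun i => (((h i).val : ℕ) : ZMod f))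
        (fun i => (((x i).val : ℕ) : ZMod f)) i = ((cz h x i : ℤ) : ZMod f) := by
      intro i
      fin_cases i <;> simp [hcz, cross3] <;> (push_cast; ring)
    simp only [funext_iff, Pi.zero_apply]
    apply forall_congr'
    intro i
    rw [hkey i, ZMod.intCast_zmod_eq_zero_iff_dvd]
  -- step 3 : fiber counting down to ZMod f
  have e1 : ∀ h : Fin 3 → ZMod m,
      (∑ x : Fin 3 → ZMod m, (m : ℂ) ^ 3 * (if (∀ i, (f : ℤ) ∣ cz h x i) then 1 else 0)) =
      (m : ℂ) ^ 3 * ∑ x : Fin 3 → ZMod m,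
        (if cross3 (fun i => (((h i).val : ℕ) : ZMod f))
            (fun i => (((x i).val : ℕ) : ZMod f)) = 0 then (1 : ℂ) else 0) := by
    intro h
    rw [Finset.mul_sum]
    exact Finset.sum_congr rfl fun x _ => by rw [if_congr (hpred h x) rfl rfl]
  rw [Finset.sum_congr rfl (fun h _ => e1 h), ← Finset.mul_sum]
  have e2 : ∀ h : Fin 3 → ZMod m,
      (∑ x : Fin 3 → ZMod m,
        (if cross3 (fun i => (((h i).val : ℕ) : ZMod f))
            (fun i => (((x i).val : ℕ) : ZMod f)) = 0 then (1 : ℂ) else 0)) =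
      (d : ℂ) ^ 3 * ∑ x' : Fin 3 → ZMod f,
        (if cross3 (fun i => (((h i).val : ℕ) : ZMod f)) x' = 0 then (1 : ℂ) else 0) := by
    intro h
    have := sum_pi_zmod_castdown (N := f) (M := m) hfm (A := ℂ)
      (fun x' => if cross3 (fun i => (((h i).val : ℕ) : ZMod f)) x' = 0 then (1 : ℂ) else 0)
    rw [this, hmf, nsmul_eq_mul]
    push_cast
    ring
  rw [Finset.sum_congr rfl (fun h _ => e2 h), ← Finset.mul_sum]
  have e3 : (∑ h : Fin 3 → ZMod m, ∑ x' : Fin 3 → ZMod f,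
      (if cross3 (fun i => (((h i).val : ℕ) : ZMod f)) x' = 0 then (1 : ℂ) else 0)) =
      (d : ℂ) ^ 3 * ((FF f : ℕ) : ℂ) := by
    have := sum_pi_zmod_castdown (N := f) (M := m) hfm (A := ℂ)
      (fun h' => ∑ x' : Fin 3 → ZMod f, (if cross3 h' x' = 0 then (1 : ℂ) else 0))
    rw [this, hmf, nsmul_eq_mul]
    have e4 : ∀ h' : Fin 3 → ZMod f,
        (∑ x' : Fin 3 → ZMod f, (if cross3 h' x' = 0 then (1 : ℂ) else 0)) =
        ((solCount (ZMod f) h' : ℕ) : ℂ) := by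
      intro h'
      rw [Finset.sum_boole]
      rfl
    rw [Finset.sum_congr rfl (fun h' _ => e4 h')]
    have e5 : (∑ h' : Fin 3 → ZMod f, ((solCount (ZMod f) h' : ℕ) : ℂ)) = ((FF f : ℕ) : ℂ) := by
      unfold FF
      push_cast
      rfl
    rw [e5]
    push_cast
    ring
  rw [e3, FF_formula f]
  have hfC : (f : ℂ) ≠ 0 := Nat.cast_ne_zero.mpr hf0
  have hmC : (m : ℂ) = (d : ℂ) * (f : ℂ) := by exact_mod_cast congrArg (Nat.cast : ℕ → ℂ) hmdf
  have hdC : (d : ℂ) ≠ 0 := Nat.cast_ne_zero.mpr hd0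
  rw [hmC]
  field_simp
end

section
/- Let m ≥ 1 be an odd integer and let D_m denote the dihedral group of order 2m. Consider the set of commuting pairs {(g,h) ∈ D_m × D_m : gh = hg}, with D_m acting on it by simultaneous conjugation x · (g,h) = (xgx⁻¹, xhx⁻¹). Then the number of orbits of this action equals (m² + 7)/2. (This is the ground state degeneracy on the torus of the twisted quantum double model with group D_m, for every 3-cocycle class in H³(D_m, U(1)).) -/
open DihedralGroup

namespace GsdAux

variable {m : ℕ}

lemma inv_r (i : ZMod m) : (DihedralGroup.r i)⁻¹ = DihedralGroup.r (-i) := rfl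
lemma inv_sr (i : ZMod m) : (DihedralGroup.sr i)⁻¹ = DihedralGroup.sr i := rfl

/-- The setoid on `ZMod m × ZMod m` identifying `v` with `-v`. -/
def negSetoid (m : ℕ) : Setoid (ZMod m × ZMod m) where
  r v w := w = v ∨ w = -v
  iseqv := by
    refine ⟨fun v => Or.inl rfl, ?_, ?_⟩
    · rintro v w (rfl | rfl)
      · exact Or.inl rfl
      · exact Or.inr (neg_neg v).symm
    · rintro u v w (rfl | rfl) (rfl | rfl)
      · exact Or.inl rfl
      · exact Or.inr rfl
      · exact Or.inr rfl
      · rw [neg_neg]; exact Or.inl rfl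

instance : DecidableRel (negSetoid m).r := fun v w =>
  inferInstanceAs (Decidable (w = v ∨ w = -v))

/-- Classification of a pair of dihedral elements. -/
def cls : DihedralGroup m × DihedralGroup m → Quotient (negSetoid m) ⊕ Fin 3
  | (.r a, .r b) => .inl (Quotient.mk (negSetoid m) (a, b))
  | (.r _, .sr _) => .inr 0
  | (.sr _, .r _) => .inr 1
  | (.sr _, .sr _) => .inr 2

lemma cls_conj (x : DihedralGroup m) (p : DihedralGroup m × DihedralGroup m) :
    cls (x * p.1 * x⁻¹, x * p.2 * x⁻¹) = cls p := by
  obtain ⟨g1, g2⟩ := p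
  rcases x with t | t <;> rcases g1 with a | a <;> rcases g2 with b | b <;>
    simp only [cls, inv_r, inv_sr, r_mul_r, r_mul_sr, sr_mul_r, sr_mul_sr]
  · refine congrArg Sum.inl (Quotient.sound ?_)
    refine Or.inl ?_
    ext <;> dsimp <;> ring
  · refine congrArg Sum.inl (Quotient.sound ?_)
    refine Or.inr ?_
    ext <;> dsimp <;> ring

/-- Oddness gives cancellation of doubling in `ZMod m`. -/
lemma add_self_eq_zero (hm : Odd m) {x : ZMod m} (h : x + x = 0) : x = 0 := by
  have hu : IsUnit (2 : ZMod m) := by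
    have := (ZMod.isUnit_iff_coprime 2 m).mpr (Nat.coprime_two_left.mpr hm)
    simpa using this
  have h2 : (2 : ZMod m) * x = (2 : ZMod m) * 0 := by ring_nf; linear_combination h
  exact hu.mul_left_cancel h2

lemma exists_add_self (hm : Odd m) (c : ZMod m) : ∃ t : ZMod m, t + t = c := by
  have hu : IsUnit (2 : ZMod m) := by
    have := (ZMod.isUnit_iff_coprime 2 m).mpr (Nat.coprime_two_left.mpr hm)
    simpa using this
  obtain ⟨u, hu'⟩ := hu
  refine ⟨(↑u⁻¹ : ZMod m) * c, ?_⟩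
  have : ((u : ZMod m)) * ((↑u⁻¹ : ZMod m) * c) = c := by
    rw [← mul_assoc, u.mul_inv, one_mul]
  calc (↑u⁻¹ : ZMod m) * c + (↑u⁻¹ : ZMod m) * c
      = (2 : ZMod m) * ((↑u⁻¹ : ZMod m) * c) := by ring
    _ = c := by rw [← hu']; exact this

lemma neg_self_eq_zero (hm : Odd m) {v : ZMod m × ZMod m} (h : v = -v) : v = 0 := by
  have h1 : v.1 = -v.1 := by have := congrArg Prod.fst h; simpa using this
  have h2 : v.2 = -v.2 := by have := congrArg Prod.snd h; simpa using this
  have e1 : v.1 + v.1 = 0 := by linear_combination h1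
  have e2 : v.2 + v.2 = 0 := by linear_combination h2
  have z1 := add_self_eq_zero hm e1
  have z2 := add_self_eq_zero hm e2
  exact Prod.ext z1 z2

section count

variable [NeZero m]

/-- encoding of a pair as a natural number -/
def enc (v : ZMod m × ZMod m) : ℕ := v.1.val * m + v.2.val

lemma enc_inj : Function.Injective (enc (m := m)) := by
  intro v w h
  have hvm : v.2.val < m := ZMod.val_lt _
  have hwm : w.2.val < m := ZMod.val_lt _
  have h2 : v.2.val = w.2.val := by
    have hmod := congrArg (· % m) h
    simp only [enc] at hmod
    rw [Nat.add_comm (v.1.val * m), Nat.add_comm (w.1.val * m),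
      Nat.add_mul_mod_self_right, Nat.add_mul_mod_self_right,
      Nat.mod_eq_of_lt hvm, Nat.mod_eq_of_lt hwm] at hmod
    exact hmod
  have h1 : v.1.val = w.1.val := by
    have hm0 : 0 < m := Nat.pos_of_ne_zero (NeZero.ne m)
    have : v.1.val * m = w.1.val * m := by unfold enc at h; omega
    exact Nat.eq_of_mul_eq_mul_right hm0 this
  have e1 : v.1 = w.1 := ZMod.val_injective m h1
  have e2 : v.2 = w.2 := ZMod.val_injective m h2
  exact Prod.ext e1 e2

/-- canonical representative of a negation class -/
def pick (v : ZMod m × ZMod m) : ZMod m × ZMod m :=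
  if enc v ≤ enc (-v) then v else -v

lemma pick_spec (v : ZMod m × ZMod m) : pick v = v ∨ pick v = -v := by
  unfold pick; split <;> [exact Or.inl rfl; exact Or.inr rfl]

lemma pick_le (v : ZMod m × ZMod m) : enc (pick v) ≤ enc (-(pick v)) := by
  unfold pick
  by_cases h : enc v ≤ enc (-v)
  · simpa [h] using h
  · simp only [h, if_false, neg_neg]
    exact le_of_not_ge h

lemma pick_neg (v : ZMod m × ZMod m) : pick (-v) = pick v := by
  unfold pick
  rw [neg_neg]
  by_cases h : enc v ≤ enc (-v) <;> by_cases h' : enc (-v) ≤ enc v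
  · have hv : v = -v := enc_inj (le_antisymm h h')
    simp [h, h', ← hv]
  · simp [h, h']
  · simp [h, h']
  · exact absurd (le_total (enc v) (enc (-v))) (by tauto)

/-- The negation quotient is equivalent to the set of canonical representatives. -/
def negQuotEquiv : Quotient (negSetoid m) ≃ {v : ZMod m × ZMod m // enc v ≤ enc (-v)} where
  toFun := Quotient.lift (fun v => ⟨pick v, pick_le v⟩) (by
    rintro a b (rfl | rfl)
    · rfl
    · exact Subtype.ext (pick_neg a).symm)
  invFun v := Quotient.mk (negSetoid m) v.1
  left_inv := by
    refine Quotient.ind fun v => ?_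
    refine Quotient.sound ?_
    rcases pick_spec v with h | h
    · exact Or.inl h.symm
    · have hv : v = -(pick v) := by rw [h, neg_neg]
      exact Or.inr hv
  right_inv := by
    rintro ⟨v, hv⟩
    simp only [Quotient.lift_mk]
    exact Subtype.ext (if_pos hv)

lemma two_mul_card_negQuot (hm : Odd m) :
    2 * Nat.card (Quotient (negSetoid m)) = m ^ 2 + 1 := by
  classical
  rw [Nat.card_congr (negQuotEquiv (m := m)), Nat.card_eq_fintype_card, Fintype.card_subtype]
  set S : Finset (ZMod m × ZMod m) := Finset.univ.filter (fun v => enc v ≤ enc (-v)) with hS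
  have h0 : (0 : ZMod m × ZMod m) ∈ S := by
    simp [hS]
  have hcompl : (S.erase 0).card =
      (Finset.univ.filter (fun v : ZMod m × ZMod m => ¬ enc v ≤ enc (-v))).card := by
    refine Finset.card_bij' (fun v _ => -v) (fun w _ => -w) ?_ ?_ ?_ ?_
    · intro v hv
      simp only [hS, Finset.mem_erase, Finset.mem_filter, Finset.mem_univ, true_and] at hv ⊢
      obtain ⟨hvne, hvle⟩ := hv
      rw [neg_neg]
      intro hle
      have hvv : v = -v := enc_inj (le_antisymm hvle hle)
      exact hvne (neg_self_eq_zero hm hvv)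
    · intro w hw
      simp only [hS, Finset.mem_erase, Finset.mem_filter, Finset.mem_univ, true_and] at hw ⊢
      constructor
      · intro h
        apply hw
        have : w = 0 := by simpa using congrArg Neg.neg h
        simp [this]
      · rw [neg_neg]; exact le_of_not_ge hw
    · intro v _; exact neg_neg v
    · intro w _; exact neg_neg w
  have hsplit : S.card + (Finset.univ.filter
      (fun v : ZMod m × ZMod m => ¬ enc v ≤ enc (-v))).card = m ^ 2 := by
    rw [hS, Finset.card_filter_add_card_filter_not]
    simp [ZMod.card, sq]
  have herase : (S.erase 0).card = S.card - 1 := Finset.card_erase_of_mem h0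
  have hpos : 1 ≤ S.card := Finset.card_pos.mpr ⟨0, h0⟩
  omega

end count

end GsdAux

open GsdAux in
theorem gsd_dihedral_odd (m : ℕ) (hm1 : 1 ≤ m) (hm : Odd m) :
    2 * Nat.card (Quot (fun p q :
        {p : DihedralGroup m × DihedralGroup m // p.1 * p.2 = p.2 * p.1} =>
          ∃ x : DihedralGroup m,
            x * p.1.1 * x⁻¹ = q.1.1 ∧ x * p.1.2 * x⁻¹ = q.1.2)) =
      m ^ 2 + 7 := by
  classical
  haveI : NeZero m := ⟨by omega⟩
  set rel := (fun p q :
      {p : DihedralGroup m × DihedralGroup m // p.1 * p.2 = p.2 * p.1} =>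
        ∃ x : DihedralGroup m,
          x * p.1.1 * x⁻¹ = q.1.1 ∧ x * p.1.2 * x⁻¹ = q.1.2) with hrel
  -- the classifying map descends to the quotient
  have hlift : ∀ p q, rel p q → cls p.1 = cls q.1 := by
    rintro p q ⟨x, h1, h2⟩
    have : q.1 = (x * p.1.1 * x⁻¹, x * p.1.2 * x⁻¹) := by
      ext <;> simp [h1, h2]
    rw [this, cls_conj]
  let g : Quot rel → Quotient (negSetoid m) ⊕ Fin 3 :=
    Quot.lift (fun p => cls p.1) hlift
  have hinj : Function.Injective g := by
    intro a b
    refine Quot.induction_on₂ a b ?_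
    rintro ⟨⟨g1, g2⟩, hp⟩ ⟨⟨h1, h2⟩, hq⟩ h
    refine Quot.sound ?_
    simp only [g] at h
    rcases g1 with a | a <;> rcases g2 with b | b <;>
      rcases h1 with a' | a' <;> rcases h2 with b' | b' <;>
      simp only [cls, Sum.inl.injEq, Sum.inr.injEq, reduceCtorEq,
        Fin.isValue] at h <;> try exact absurd h (by decide)
    · -- rotation pairs
      rcases Quotient.exact h with h' | h'
      · obtain ⟨ha, hb⟩ := Prod.mk.injEq .. ▸ h'
        exact ⟨1, by simp [ha.symm, hb.symm]⟩
      · have ha : a' = -a := congrArg Prod.fst h'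
        have hb : b' = -b := congrArg Prod.snd h'
        refine ⟨DihedralGroup.sr 0, ?_, ?_⟩ <;>
          simp [GsdAux.inv_sr, ha, hb] <;> ring_nf
    · -- (r a, sr b) pairs: commuting forces a = a' = 0
      have ha : a = 0 := by
        have := hp
        simp only [r_mul_sr, sr_mul_r, DihedralGroup.sr.injEq] at this
        apply add_self_eq_zero hm
        linear_combination -this
      have ha' : a' = 0 := by
        have := hq
        simp only [r_mul_sr, sr_mul_r, DihedralGroup.sr.injEq] at this
        apply add_self_eq_zero hm
        linear_combination -this
      obtain ⟨t, ht⟩ := exists_add_self hm (b - b')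
      refine ⟨DihedralGroup.r t, ?_, ?_⟩
      · simp [GsdAux.inv_r, ha, ha']
      · simp only [r_mul_sr, sr_mul_r, GsdAux.inv_r, DihedralGroup.sr.injEq]
        linear_combination -ht
    · -- (sr a, r b) pairs: commuting forces b = b' = 0
      have hb : b = 0 := by
        have := hp
        simp only [r_mul_sr, sr_mul_r, DihedralGroup.sr.injEq] at this
        apply add_self_eq_zero hm
        linear_combination this
      have hb' : b' = 0 := by
        have := hq
        simp only [r_mul_sr, sr_mul_r, DihedralGroup.sr.injEq] at this
        apply add_self_eq_zero hm
        linear_combination this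
      obtain ⟨t, ht⟩ := exists_add_self hm (a - a')
      refine ⟨DihedralGroup.r t, ?_, ?_⟩
      · simp only [r_mul_sr, sr_mul_r, GsdAux.inv_r, DihedralGroup.sr.injEq]
        linear_combination -ht
      · simp [GsdAux.inv_r, hb, hb']
    · -- (sr a, sr b) pairs: commuting forces a = b, a' = b'
      have hab : a = b := by
        have := hp
        simp only [sr_mul_sr, DihedralGroup.r.injEq] at this
        have h2 : (a - b) + (a - b) = 0 := by linear_combination -this
        have := add_self_eq_zero hm h2
        linear_combination this
      have hab' : a' = b' := by
        have := hq
        simp only [sr_mul_sr, DihedralGroup.r.injEq] at this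
        have h2 : (a' - b') + (a' - b') = 0 := by linear_combination -this
        have := add_self_eq_zero hm h2
        linear_combination this
      obtain ⟨t, ht⟩ := exists_add_self hm (a - a')
      refine ⟨DihedralGroup.r t, ?_, ?_⟩
      · simp only [r_mul_sr, sr_mul_r, GsdAux.inv_r, DihedralGroup.sr.injEq]
        linear_combination -ht
      · simp only [r_mul_sr, sr_mul_r, GsdAux.inv_r, DihedralGroup.sr.injEq]
        linear_combination hab.symm - hab'.symm - ht
  have hsurj : Function.Surjective g := by
    rintro (c | c)
    · refine Quotient.inductionOn c ?_
      rintro ⟨a, b⟩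
      exact ⟨Quot.mk rel ⟨(DihedralGroup.r a, DihedralGroup.r b), by simp [add_comm]⟩, rfl⟩
    · fin_cases c
      · exact ⟨Quot.mk rel ⟨(DihedralGroup.r 0, DihedralGroup.sr 0), by simp⟩, rfl⟩
      · exact ⟨Quot.mk rel ⟨(DihedralGroup.sr 0, DihedralGroup.r 0), by simp⟩, rfl⟩
      · exact ⟨Quot.mk rel ⟨(DihedralGroup.sr 0, DihedralGroup.sr 0), by simp⟩, rfl⟩
  have hcard : Nat.card (Quot rel) =
      Nat.card (Quotient (negSetoid m) ⊕ Fin 3) :=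
    Nat.card_eq_of_bijective g ⟨hinj, hsurj⟩
  rw [hcard, Nat.card_sum]
  have := two_mul_card_negQuot (m := m) hm
  simp only [Nat.card_eq_fintype_card, Fintype.card_fin] at *
  omega
end
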